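/- arXiv:2101.09519 — 8 statements merged into one kernel-verified Lean document; each statement's English description precedes it below -/
import Mathlib

section
/- max_{t ∈ [0,1]} ∫₀¹ |G(t,s)| ds ≤ 1/2. -/
open Set MeasureTheory

/-- The Green function of the problem `u''' = ψ`, `u(0) = u'(0) = u'(1) = 0` on `[0,1]`. -/
noncomputable def G01 (t s : ℝ) : ℝ :=
  if s ≤ t then s / 2 * (t ^ 2 - 2 * t + s) else t ^ 2 / 2 * (s - 1)

/-- `max_{t ∈ [0,1]} ∫₀¹ |G(t,s)| ds ≤ 1/2`. -/
theorem green_kernel_integral_bound :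
    ∀ t ∈ Icc (0:ℝ) 1, (∫ s in (0:ℝ)..1, |G01 t s|) ≤ 1 / 2 := by
  intro t ht
  obtain ⟨ht0, ht1⟩ := ht
  have hcont : Continuous fun s => G01 t s := by
    unfold G01
    apply Continuous.if
    · intro s hs
      have hst : s ∈ frontier (Iic t) := by simpa [Iic] using hs
      rw [frontier_Iic] at hst
      simp only [mem_singleton_iff] at hst
      subst hst
      ring
    · fun_prop
    · fun_prop
  have hint : IntervalIntegrable (fun s => |G01 t s|) volume 0 1 :=
    (hcont.abs).intervalIntegrable 0 1
  have hle : ∀ s ∈ Icc (0:ℝ) 1, |G01 t s| ≤ 1 / 2 := by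
    intro s hs
    obtain ⟨hs0, hs1⟩ := hs
    unfold G01
    split_ifs with h
    · rw [abs_le]
      constructor <;> nlinarith [sq_nonneg (t - 1), mul_nonneg hs0 hs0, sq_nonneg (s - 1),
        mul_nonneg hs0 (sub_nonneg.2 h), mul_nonneg hs0 ht0, mul_nonneg ht0 ht0]
    · push_neg at h
      rw [abs_le]
      constructor <;> nlinarith [sq_nonneg t, mul_nonneg ht0 ht0,
        mul_nonneg (mul_nonneg ht0 ht0) (sub_nonneg.2 hs1), mul_nonneg (mul_nonneg ht0 ht0) hs0]
  calc (∫ s in (0:ℝ)..1, |G01 t s|) ≤ ∫ s in (0:ℝ)..1, (1:ℝ) / 2 := by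
        apply intervalIntegral.integral_mono_on (by norm_num) hint
          (intervalIntegrable_const) hle
    _ = 1 / 2 := by simp
end

section
/- Suppose ψ: [0,1] → ℝ is continuous and satisfies ψ(t) = f(t, u(t), u(φ(t))) for all t ∈ [0,1], where u(t) = g(t) + ∫₀¹ G(t,s) ψ(s) ds. Then u is three times continuously differentiable on [0,1], u'''(t) = f(t, u(t), u(φ(t))) for all t ∈ [0,1], and u(0) = b1, u'(0) = b2, u'(1) = b3. -/
open Set MeasureTheory intervalIntegral

/-- The quadratic polynomial with `g(0) = b1`, `g'(0) = b2`, `g'(1) = b3`. -/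
noncomputable def gq (b1 b2 b3 t : ℝ) : ℝ := b1 + b2 * t + (b3 - b2) / 2 * t ^ 2

section Aux
variable (b1 b2 b3 : ℝ) (c : ℝ → ℝ)

noncomputable def iA (x : ℝ) : ℝ := ∫ s in (0:ℝ)..x, c s
noncomputable def iB (x : ℝ) : ℝ := ∫ s in (0:ℝ)..x, s * c s
noncomputable def iC (x : ℝ) : ℝ := ∫ s in (0:ℝ)..x, s ^ 2 * c s

noncomputable def vv (t : ℝ) : ℝ :=
  gq b1 b2 b3 t + t ^ 2 / 2 * (iB c 1 - iA c 1) + t ^ 2 / 2 * iA c t - t * iB c t + iC c t / 2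

noncomputable def vv1 (t : ℝ) : ℝ :=
  b2 + (b3 - b2) * t + t * (iB c 1 - iA c 1) + t * iA c t - iB c t

noncomputable def vv2 (t : ℝ) : ℝ := (b3 - b2) + (iB c 1 - iA c 1) + iA c t

variable (hc : Continuous c)

lemma hG01cont (t : ℝ) : Continuous (fun s => G01 t s) := by
  unfold G01
  apply Continuous.if_le
  · fun_prop
  · fun_prop
  · exact continuous_id
  · exact continuous_const
  · intro s hs; rw [hs]; ring

include hc

lemma hiA (t : ℝ) : HasDerivAt (iA c) (c t) t :=
  (hc.integral_hasStrictDerivAt 0 t).hasDerivAt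

lemma hiB (t : ℝ) : HasDerivAt (iB c) (t * c t) t :=
  (((continuous_id'.mul hc)).integral_hasStrictDerivAt 0 t).hasDerivAt

lemma hiC (t : ℝ) : HasDerivAt (iC c) (t ^ 2 * c t) t :=
  ((((continuous_pow 2).mul hc)).integral_hasStrictDerivAt 0 t).hasDerivAt

lemma hvv (t : ℝ) : HasDerivAt (vv b1 b2 b3 c) (vv1 b2 b3 c t) t := by
  have h1 : HasDerivAt (fun t : ℝ => gq b1 b2 b3 t)
      (0 + b2 * 1 + (b3 - b2) / 2 * (↑2 * t ^ 1)) t := by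
    exact ((hasDerivAt_const t b1).add ((hasDerivAt_id t).const_mul b2)).add
      ((hasDerivAt_pow 2 t).const_mul ((b3 - b2) / 2))
  have h2 : HasDerivAt (fun t : ℝ => t ^ 2 / 2 * (iB c 1 - iA c 1))
      ((↑2 * t ^ 1) / 2 * (iB c 1 - iA c 1)) t :=
    ((hasDerivAt_pow 2 t).div_const 2).mul_const _
  have h3 : HasDerivAt (fun t : ℝ => t ^ 2 / 2 * iA c t)
      ((↑2 * t ^ 1) / 2 * iA c t + t ^ 2 / 2 * c t) t :=
    ((hasDerivAt_pow 2 t).div_const 2).mul (hiA c hc t)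
  have h4 : HasDerivAt (fun t : ℝ => t * iB c t) (1 * iB c t + t * (t * c t)) t :=
    (hasDerivAt_id t).mul (hiB c hc t)
  have h5 : HasDerivAt (fun t : ℝ => iC c t / 2) ((t ^ 2 * c t) / 2) t :=
    (hiC c hc t).div_const 2
  have := ((((h1.add h2).add h3).sub h4).add h5)
  exact this.congr_deriv (by simp [vv1]; ring)

lemma hvv1 (t : ℝ) : HasDerivAt (vv1 b2 b3 c) (vv2 b2 b3 c t) t := by
  have h1 : HasDerivAt (fun t : ℝ => b2 + (b3 - b2) * t) (0 + (b3 - b2) * 1) t :=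
    (hasDerivAt_const t b2).add ((hasDerivAt_id t).const_mul (b3 - b2))
  have h2 : HasDerivAt (fun t : ℝ => t * (iB c 1 - iA c 1)) (1 * (iB c 1 - iA c 1)) t :=
    (hasDerivAt_id t).mul_const _
  have h3 : HasDerivAt (fun t : ℝ => t * iA c t) (1 * iA c t + t * c t) t :=
    (hasDerivAt_id t).mul (hiA c hc t)
  have h4 := hiB c hc t
  have := ((h1.add h2).add h3).sub h4
  exact this.congr_deriv (by simp [vv2]; ring)

lemma hvv2 (t : ℝ) : HasDerivAt (vv2 b2 b3 c) (c t) t := by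
  have h := (hasDerivAt_const t ((b3 - b2) + (iB c 1 - iA c 1))).add (hiA c hc t)
  have he : (fun x => (b3 - b2) + (iB c 1 - iA c 1)) + iA c = vv2 b2 b3 c := by
    funext x; simp [vv2]
  rw [he] at h
  simpa using h

lemma keyeq {t : ℝ} (ht : t ∈ Icc (0:ℝ) 1) :
    gq b1 b2 b3 t + (∫ s in (0:ℝ)..1, G01 t s * c s) = vv b1 b2 b3 c t := by
  obtain ⟨ht0, ht1⟩ := ht
  have hint : ∀ a b : ℝ, IntervalIntegrable (fun s => G01 t s * c s) volume a b :=
    fun a b => ((hG01cont t).mul hc).intervalIntegrable a b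
  have hsplit : (∫ s in (0:ℝ)..1, G01 t s * c s)
      = (∫ s in (0:ℝ)..t, G01 t s * c s) + ∫ s in t..1, G01 t s * c s :=
    (integral_add_adjacent_intervals (hint 0 t) (hint t 1)).symm
  have hI1 : (∫ s in (0:ℝ)..t, G01 t s * c s)
      = (t ^ 2 - 2 * t) / 2 * iB c t + iC c t / 2 := by
    have e1 : (∫ s in (0:ℝ)..t, G01 t s * c s)
        = ∫ s in (0:ℝ)..t, ((t ^ 2 - 2 * t) / 2 * (s * c s) + (1 / 2) * (s ^ 2 * c s)) := by
      apply integral_congr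
      intro s hs
      rw [uIcc_of_le ht0] at hs
      simp only [G01, if_pos hs.2]
      ring
    rw [e1, integral_add (((show Continuous fun s => s * c s from continuous_id'.mul hc).intervalIntegrable 0 t).const_mul _)
        (((show Continuous fun s => s ^ 2 * c s from (continuous_pow 2).mul hc).intervalIntegrable 0 t).const_mul _),
      intervalIntegral.integral_const_mul, intervalIntegral.integral_const_mul]
    show (t ^ 2 - 2 * t) / 2 * iB c t + 1 / 2 * iC c t = _
    ring
  have hI2 : (∫ s in t..1, G01 t s * c s)
      = t ^ 2 / 2 * ((iB c 1 - iB c t) - (iA c 1 - iA c t)) := by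
    have e1 : (∫ s in t..1, G01 t s * c s)
        = ∫ s in t..1, t ^ 2 / 2 * (s * c s - c s) := by
      apply integral_congr
      intro s hs
      rw [uIcc_of_le ht1] at hs
      by_cases hst : s ≤ t
      · have : s = t := le_antisymm hst hs.1
        subst this
        simp only [G01, if_pos le_rfl]
        ring
      · simp only [G01, if_neg hst]
        ring
    rw [e1, intervalIntegral.integral_const_mul,
      integral_sub ((show Continuous fun s => s * c s from continuous_id'.mul hc).intervalIntegrable t 1) (hc.intervalIntegrable t 1)]
    have eB : (∫ s in t..1, s * c s) = iB c 1 - iB c t :=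
      (integral_interval_sub_left ((continuous_id'.mul hc).intervalIntegrable 0 1)
        ((continuous_id'.mul hc).intervalIntegrable 0 t)).symm
    have eA : (∫ s in t..1, c s) = iA c 1 - iA c t :=
      (integral_interval_sub_left (hc.intervalIntegrable 0 1)
        (hc.intervalIntegrable 0 t)).symm
    rw [eB, eA]
  rw [hsplit, hI1, hI2, vv]
  ring

end Aux

/-- If a continuous `ψ` satisfies `ψ(t) = f(t, u(t), u(φ(t)))` on `[0,1]`, where
`u(t) = g(t) + ∫₀¹ G(t,s) ψ(s) ds`, then `u` is three times continuously differentiable on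
`[0,1]`, solves `u'''(t) = f(t, u(t), u(φ(t)))` there, and satisfies the boundary conditions
`u(0) = b1`, `u'(0) = b2`, `u'(1) = b3`. -/


theorem fixed_point_gives_solution
    (b1 b2 b3 : ℝ) (φ : ℝ → ℝ) (f : ℝ → ℝ → ℝ → ℝ)
    (hφc : ContinuousOn φ (Icc 0 1)) (hφm : MapsTo φ (Icc 0 1) (Icc 0 1))
    (hfc : ContinuousOn (fun p : ℝ × ℝ × ℝ => f p.1 p.2.1 p.2.2)
      (Icc 0 1 ×ˢ (univ : Set ℝ) ×ˢ (univ : Set ℝ)))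
    (ψ : ℝ → ℝ) (hψ : ContinuousOn ψ (Icc 0 1))
    (u : ℝ → ℝ)
    (hu : ∀ t : ℝ, u t = gq b1 b2 b3 t + ∫ s in (0:ℝ)..1, G01 t s * ψ s)
    (hfix : ∀ t ∈ Icc (0:ℝ) 1, ψ t = f t (u t) (u (φ t))) :
    ContDiffOn ℝ 3 u (Icc 0 1) ∧
    (∀ t ∈ Icc (0:ℝ) 1,
      derivWithin (derivWithin (derivWithin u (Icc 0 1)) (Icc 0 1)) (Icc 0 1) t
        = f t (u t) (u (φ t))) ∧
    u 0 = b1 ∧ derivWithin u (Icc 0 1) 0 = b2 ∧ derivWithin u (Icc 0 1) 1 = b3 := by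
  set c : ℝ → ℝ := fun t => ψ (max 0 (min t 1)) with hcdef
  have hceq : ∀ s ∈ Icc (0:ℝ) 1, c s = ψ s := by
    intro s hs
    simp only [hcdef, min_eq_left hs.2, max_eq_right hs.1]
  have hc : Continuous c := by
    apply hψ.comp_continuous (by fun_prop)
    intro x
    exact ⟨le_max_left _ _, max_le zero_le_one (min_le_right _ _)⟩
  have hveq : EqOn u (vv b1 b2 b3 c) (Icc 0 1) := by
    intro t ht
    rw [hu t, show (∫ s in (0:ℝ)..1, G01 t s * ψ s) = ∫ s in (0:ℝ)..1, G01 t s * c s from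
      (integral_congr fun s hs => by
        rw [uIcc_of_le zero_le_one] at hs
        rw [hceq s hs])]
    exact keyeq b1 b2 b3 c hc ht
  have hud : UniqueDiffOn ℝ (Icc (0:ℝ) 1) := uniqueDiffOn_Icc zero_lt_one
  have d1 : EqOn (derivWithin u (Icc 0 1)) (vv1 b2 b3 c) (Icc 0 1) := by
    intro t ht
    rw [derivWithin_congr hveq (hveq ht)]
    exact (hvv b1 b2 b3 c hc t).hasDerivWithinAt.derivWithin (hud t ht)
  have d2 : EqOn (derivWithin (derivWithin u (Icc 0 1)) (Icc 0 1)) (vv2 b2 b3 c) (Icc 0 1) := by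
    intro t ht
    rw [derivWithin_congr d1 (d1 ht)]
    exact (hvv1 b2 b3 c hc t).hasDerivWithinAt.derivWithin (hud t ht)
  have d3 : ∀ t ∈ Icc (0:ℝ) 1,
      derivWithin (derivWithin (derivWithin u (Icc 0 1)) (Icc 0 1)) (Icc 0 1) t = c t := by
    intro t ht
    rw [derivWithin_congr d2 (d2 ht)]
    exact (hvv2 b2 b3 c hc t).hasDerivWithinAt.derivWithin (hud t ht)
  have hdv : deriv (vv b1 b2 b3 c) = vv1 b2 b3 c := funext fun t => (hvv b1 b2 b3 c hc t).deriv
  have hdv1 : deriv (vv1 b2 b3 c) = vv2 b2 b3 c := funext fun t => (hvv1 b2 b3 c hc t).deriv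
  have hdv2 : deriv (vv2 b2 b3 c) = c := funext fun t => (hvv2 b2 b3 c hc t).deriv
  have h3 : ContDiff ℝ 3 (vv b1 b2 b3 c) := by
    rw [show (3 : WithTop ℕ∞) = 2 + 1 from rfl, contDiff_succ_iff_deriv]
    refine ⟨fun t => (hvv b1 b2 b3 c hc t).differentiableAt, by simp, ?_⟩
    rw [hdv, show (2 : WithTop ℕ∞) = 1 + 1 from rfl, contDiff_succ_iff_deriv]
    refine ⟨fun t => (hvv1 b2 b3 c hc t).differentiableAt, by simp, ?_⟩
    rw [hdv1, contDiff_one_iff_deriv]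
    exact ⟨fun t => (hvv2 b2 b3 c hc t).differentiableAt, by rw [hdv2]; exact hc⟩
  refine ⟨h3.contDiffOn.congr hveq, ?_, ?_, ?_, ?_⟩
  · intro t ht
    rw [d3 t ht, hceq t ht]
    exact hfix t ht
  · rw [hveq (left_mem_Icc.mpr zero_le_one)]
    simp [vv, gq, iC, intervalIntegral.integral_same]
  · rw [d1 (left_mem_Icc.mpr zero_le_one)]
    simp [vv1, iB, intervalIntegral.integral_same]
  · rw [d1 (right_mem_Icc.mpr zero_le_one)]
    simp [vv1]; ring
end

section
/- Assume |f(t,u,v)| ≤ M for all (t,u,v) ∈ D_M, and that f satisfies the Lipschitz conditions |f(t,u2,v2) − f(t,u1,v1)| ≤ L1|u2 − u1| + L2|v2 − v1| for all (t,u1,v1), (t,u2,v2) ∈ D_M, with constants L1, L2 ≥ 0. Then for all continuous ψ1, ψ2: [0,a] → ℝ with ‖ψ1‖ ≤ M and ‖ψ2‖ ≤ M, one has ‖Aψ2 − Aψ1‖ ≤ (L1 + L2) M0 ‖ψ2 − ψ1‖. In particular, if q := (L1 + L2) M0 < 1, then A is a contraction on the closed ball B[0,M] in C[0,a]. -/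
open Set MeasureTheory

lemma key_int_bound (a : ℝ) (ha : 0 ≤ a) (k h : ℝ → ℝ)
    (hk : ContinuousOn k (Icc 0 a)) (hh : ContinuousOn h (Icc 0 a))
    (C : ℝ) (hC : ∀ s ∈ Icc (0:ℝ) a, |h s| ≤ C) :
    |∫ s in (0:ℝ)..a, k s * h s| ≤ C * ∫ s in (0:ℝ)..a, |k s| := by
  have huIcc : uIcc (0:ℝ) a = Icc 0 a := uIcc_of_le ha
  have hki : IntervalIntegrable k volume 0 a :=
    (huIcc ▸ hk).intervalIntegrable
  have hkhi : IntervalIntegrable (fun s => k s * h s) volume 0 a :=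
    ((huIcc ▸ hk).mul (huIcc ▸ hh)).intervalIntegrable
  have habs : IntervalIntegrable (fun s => |k s * h s|) volume 0 a := hkhi.abs
  have hkabs : IntervalIntegrable (fun s => |k s|) volume 0 a := hki.abs
  have hkC : IntervalIntegrable (fun s => |k s| * C) volume 0 a :=
    hkabs.mul_const C
  calc |∫ s in (0:ℝ)..a, k s * h s| ≤ ∫ s in (0:ℝ)..a, |k s * h s| :=
        intervalIntegral.abs_integral_le_integral_abs ha
    _ ≤ ∫ s in (0:ℝ)..a, |k s| * C := by
        apply intervalIntegral.integral_mono_on ha habs hkC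
        intro s hs
        rw [abs_mul]
        exact mul_le_mul_of_nonneg_left (hC s hs) (abs_nonneg _)
    _ = C * ∫ s in (0:ℝ)..a, |k s| := by
        rw [intervalIntegral.integral_mul_const, mul_comm]

/-- If `|f| ≤ M` on `D_M` and `f` is Lipschitz in its last two variables on `D_M` with
constants `L1, L2 ≥ 0`, then for all continuous `ψ1, ψ2` in the ball `B[0,M]` one has
`‖Aψ2 − Aψ1‖ ≤ (L1 + L2) M0 ‖ψ2 − ψ1‖`; in particular `A` is a contraction on `B[0,M]`
whenever `q := (L1 + L2) M0 < 1`. -/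
theorem operator_is_contraction
    (a : ℝ) (ha : 0 < a)
    (φ : ℝ → ℝ) (hφc : ContinuousOn φ (Icc 0 a)) (hφm : MapsTo φ (Icc 0 a) (Icc 0 a))
    (G : ℝ → ℝ → ℝ)
    (hG : ContinuousOn (fun p : ℝ × ℝ => G p.1 p.2) (Icc 0 a ×ˢ Icc 0 a))
    (g : ℝ → ℝ) (hg : ContinuousOn g (Icc 0 a))
    (M0 : ℝ) (hM0 : IsGreatest ((fun t => ∫ s in (0:ℝ)..a, |G t s|) '' Icc 0 a) M0)
    (ng : ℝ) (hng : IsGreatest ((fun t => |g t|) '' Icc 0 a) ng)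
    (f : ℝ → ℝ → ℝ → ℝ)
    (hfc : ContinuousOn (fun p : ℝ × ℝ × ℝ => f p.1 p.2.1 p.2.2)
      (Icc 0 a ×ˢ (univ : Set ℝ) ×ˢ (univ : Set ℝ)))
    (M : ℝ) (hM : 0 < M)
    (hbound : ∀ t ∈ Icc (0:ℝ) a, ∀ u v : ℝ,
      |u| ≤ ng + M0 * M → |v| ≤ ng + M0 * M → |f t u v| ≤ M)
    (L1 L2 : ℝ) (hL1 : 0 ≤ L1) (hL2 : 0 ≤ L2)
    (hLip : ∀ t ∈ Icc (0:ℝ) a, ∀ u1 u2 v1 v2 : ℝ,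
      |u1| ≤ ng + M0 * M → |u2| ≤ ng + M0 * M →
      |v1| ≤ ng + M0 * M → |v2| ≤ ng + M0 * M →
      |f t u2 v2 - f t u1 v1| ≤ L1 * |u2 - u1| + L2 * |v2 - v1|)
    (ψ1 ψ2 : ℝ → ℝ)
    (hψ1c : ContinuousOn ψ1 (Icc 0 a)) (hψ1M : ∀ t ∈ Icc (0:ℝ) a, |ψ1 t| ≤ M)
    (hψ2c : ContinuousOn ψ2 (Icc 0 a)) (hψ2M : ∀ t ∈ Icc (0:ℝ) a, |ψ2 t| ≤ M)
    (dd : ℝ) (hdd : IsGreatest ((fun t => |ψ2 t - ψ1 t|) '' Icc 0 a) dd) :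
    ∀ t ∈ Icc (0:ℝ) a,
      |f t (g t + ∫ s in (0:ℝ)..a, G t s * ψ2 s)
          (g (φ t) + ∫ s in (0:ℝ)..a, G (φ t) s * ψ2 s)
        - f t (g t + ∫ s in (0:ℝ)..a, G t s * ψ1 s)
          (g (φ t) + ∫ s in (0:ℝ)..a, G (φ t) s * ψ1 s)|
        ≤ (L1 + L2) * M0 * dd := by
  intro t ht
  have h0a : (0:ℝ) ∈ Icc (0:ℝ) a := ⟨le_refl 0, ha.le⟩
  have hddnn : 0 ≤ dd := (abs_nonneg _).trans (hdd.2 ⟨0, h0a, rfl⟩)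
  have huIcc : uIcc (0:ℝ) a = Icc 0 a := uIcc_of_le ha.le
  -- continuity of G r · for r ∈ Icc 0 a
  have hGr : ∀ r ∈ Icc (0:ℝ) a, ContinuousOn (fun s => G r s) (Icc 0 a) := by
    intro r hr
    exact hG.comp (continuousOn_const.prodMk continuousOn_id) (fun s hs => ⟨hr, hs⟩)
  -- ψ difference bound
  have hψd : ∀ s ∈ Icc (0:ℝ) a, |ψ2 s - ψ1 s| ≤ dd := fun s hs => hdd.2 ⟨s, hs, rfl⟩
  -- main estimates for a point r ∈ Icc 0 a
  have main : ∀ r ∈ Icc (0:ℝ) a,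
      |g r + ∫ s in (0:ℝ)..a, G r s * ψ1 s| ≤ ng + M0 * M ∧
      |g r + ∫ s in (0:ℝ)..a, G r s * ψ2 s| ≤ ng + M0 * M ∧
      |(g r + ∫ s in (0:ℝ)..a, G r s * ψ2 s) - (g r + ∫ s in (0:ℝ)..a, G r s * ψ1 s)|
        ≤ M0 * dd := by
    intro r hr
    have hGint : ∫ s in (0:ℝ)..a, |G r s| ≤ M0 := hM0.2 ⟨r, hr, rfl⟩
    have hgr : |g r| ≤ ng := hng.2 ⟨r, hr, rfl⟩
    have h1 : |∫ s in (0:ℝ)..a, G r s * ψ1 s| ≤ M * ∫ s in (0:ℝ)..a, |G r s| :=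
      key_int_bound a ha.le _ _ (hGr r hr) hψ1c M hψ1M
    have h2 : |∫ s in (0:ℝ)..a, G r s * ψ2 s| ≤ M * ∫ s in (0:ℝ)..a, |G r s| :=
      key_int_bound a ha.le _ _ (hGr r hr) hψ2c M hψ2M
    have hMM : M * ∫ s in (0:ℝ)..a, |G r s| ≤ M0 * M := by
      nlinarith
    refine ⟨?_, ?_, ?_⟩
    · calc |g r + ∫ s in (0:ℝ)..a, G r s * ψ1 s| ≤ |g r| + |∫ s in (0:ℝ)..a, G r s * ψ1 s| :=
            abs_add_le _ _
        _ ≤ ng + M0 * M := add_le_add hgr (h1.trans hMM)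
    · calc |g r + ∫ s in (0:ℝ)..a, G r s * ψ2 s| ≤ |g r| + |∫ s in (0:ℝ)..a, G r s * ψ2 s| :=
            abs_add_le _ _
        _ ≤ ng + M0 * M := add_le_add hgr (h2.trans hMM)
    · have hi1 : IntervalIntegrable (fun s => G r s * ψ1 s) volume 0 a :=
        (((huIcc ▸ hGr r hr)).mul (huIcc ▸ hψ1c)).intervalIntegrable
      have hi2 : IntervalIntegrable (fun s => G r s * ψ2 s) volume 0 a :=
        (((huIcc ▸ hGr r hr)).mul (huIcc ▸ hψ2c)).intervalIntegrable
      have heq : (g r + ∫ s in (0:ℝ)..a, G r s * ψ2 s) - (g r + ∫ s in (0:ℝ)..a, G r s * ψ1 s)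
          = ∫ s in (0:ℝ)..a, G r s * (ψ2 s - ψ1 s) := by
        simp_rw [mul_sub]
        rw [intervalIntegral.integral_sub hi2 hi1]
        ring
      rw [heq]
      have := key_int_bound a ha.le (fun s => G r s) (fun s => ψ2 s - ψ1 s)
        (hGr r hr) (hψ2c.sub hψ1c) dd hψd
      calc |∫ s in (0:ℝ)..a, G r s * (ψ2 s - ψ1 s)| ≤ dd * ∫ s in (0:ℝ)..a, |G r s| := this
        _ ≤ M0 * dd := by nlinarith
  obtain ⟨hu1, hu2, hud⟩ := main t ht
  obtain ⟨hv1, hv2, hvd⟩ := main (φ t) (hφm ht)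
  have := hLip t ht _ _ _ _ hu1 hu2 hv1 hv2
  nlinarith [this, mul_le_mul_of_nonneg_left hud hL1, mul_le_mul_of_nonneg_left hvd hL2]
end

section
/- Assume (ii) |f(t,u,v)| ≤ M for all (t,u,v) ∈ D_M; (iii) f satisfies the Lipschitz conditions |f(t,u2,v2) − f(t,u1,v1)| ≤ L1|u2 − u1| + L2|v2 − v1| for all (t,u1,v1), (t,u2,v2) ∈ D_M with constants L1, L2 ≥ 0; and (iv) q := (L1 + L2) M0 < 1. Then there exists exactly one continuous function u: [0,a] → ℝ satisfying |u(t)| ≤ ‖g‖ + M0 M for all t ∈ [0,a] and the integral equation u(t) = g(t) + ∫₀ᵃ G(t,s) f(s, u(s), u(φ(s))) ds for all t ∈ [0,a]. -/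
open Set MeasureTheory BoundedContinuousFunction

/-- Under the boundedness, Lipschitz and contraction (`q = (L1+L2) M0 < 1`) assumptions, there
exists exactly one continuous `u : [0,a] → ℝ` with `|u(t)| ≤ ‖g‖ + M0 M` satisfying the
integral equation `u(t) = g(t) + ∫₀ᵃ G(t,s) f(s, u(s), u(φ(s))) ds` on `[0,a]`. -/
theorem existence_uniqueness_integral_equation
    (a : ℝ) (ha : 0 < a)
    (φ : ℝ → ℝ) (hφc : ContinuousOn φ (Icc 0 a)) (hφm : MapsTo φ (Icc 0 a) (Icc 0 a))
    (G : ℝ → ℝ → ℝ)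
    (hG : ContinuousOn (fun p : ℝ × ℝ => G p.1 p.2) (Icc 0 a ×ˢ Icc 0 a))
    (g : ℝ → ℝ) (hg : ContinuousOn g (Icc 0 a))
    (M0 : ℝ) (hM0 : IsGreatest ((fun t => ∫ s in (0:ℝ)..a, |G t s|) '' Icc 0 a) M0)
    (ng : ℝ) (hng : IsGreatest ((fun t => |g t|) '' Icc 0 a) ng)
    (f : ℝ → ℝ → ℝ → ℝ)
    (hfc : ContinuousOn (fun p : ℝ × ℝ × ℝ => f p.1 p.2.1 p.2.2)
      (Icc 0 a ×ˢ (univ : Set ℝ) ×ˢ (univ : Set ℝ)))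
    (M : ℝ) (hM : 0 < M)
    (hbound : ∀ t ∈ Icc (0:ℝ) a, ∀ u v : ℝ,
      |u| ≤ ng + M0 * M → |v| ≤ ng + M0 * M → |f t u v| ≤ M)
    (L1 L2 : ℝ) (hL1 : 0 ≤ L1) (hL2 : 0 ≤ L2)
    (hLip : ∀ t ∈ Icc (0:ℝ) a, ∀ u1 u2 v1 v2 : ℝ,
      |u1| ≤ ng + M0 * M → |u2| ≤ ng + M0 * M →
      |v1| ≤ ng + M0 * M → |v2| ≤ ng + M0 * M →
      |f t u2 v2 - f t u1 v1| ≤ L1 * |u2 - u1| + L2 * |v2 - v1|)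
    (hq : (L1 + L2) * M0 < 1) :
    ∃ u : ℝ → ℝ,
      (ContinuousOn u (Icc 0 a) ∧
        (∀ t ∈ Icc (0:ℝ) a, |u t| ≤ ng + M0 * M) ∧
        (∀ t ∈ Icc (0:ℝ) a,
          u t = g t + ∫ s in (0:ℝ)..a, G t s * f s (u s) (u (φ s)))) ∧
      ∀ u2 : ℝ → ℝ,
        (ContinuousOn u2 (Icc 0 a) ∧
          (∀ t ∈ Icc (0:ℝ) a, |u2 t| ≤ ng + M0 * M) ∧
          (∀ t ∈ Icc (0:ℝ) a,
            u2 t = g t + ∫ s in (0:ℝ)..a, G t s * f s (u2 s) (u2 (φ s)))) →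
        EqOn u2 u (Icc 0 a) := by
  have ha' : (0:ℝ) ≤ a := ha.le
  obtain ⟨⟨t0, ht0, hM0eq⟩, hM0ub⟩ := hM0
  have hM0nn : 0 ≤ M0 := by
    rw [← hM0eq]; exact intervalIntegral.integral_nonneg ha' fun s _ => abs_nonneg _
  obtain ⟨⟨t1, ht1, hngeq⟩, hngub⟩ := hng
  have hngnn : 0 ≤ ng := by rw [← hngeq]; exact abs_nonneg _
  set R : ℝ := ng + M0 * M with hRdef
  have hRnn : 0 ≤ R := add_nonneg hngnn (mul_nonneg hM0nn hM.le)
  -- projection of ℝ onto `[0, a]`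
  set p : ℝ → ℝ := fun x => max 0 (min x a) with hpdef
  have hpc : Continuous p := continuous_const.max (continuous_id.min continuous_const)
  have hpmem : ∀ x, p x ∈ Icc (0:ℝ) a := fun x =>
    ⟨le_max_left _ _, max_le ha' (min_le_right _ _)⟩
  have hpeq : ∀ x ∈ Icc (0:ℝ) a, p x = x := fun x hx => by
    simp only [hpdef]
    rw [min_eq_left hx.2, max_eq_right hx.1]
  -- clamping of ℝ onto `[-R, R]`
  set c : ℝ → ℝ := fun x => max (min x R) (-R) with hcdef
  have hcc : Continuous c := (continuous_id.min continuous_const).max continuous_const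
  have hcabs : ∀ x, |c x| ≤ R := fun x => abs_le.mpr
    ⟨le_max_right _ _, max_le (min_le_right _ _) (by linarith)⟩
  have hceq : ∀ x : ℝ, |x| ≤ R → c x = x := fun x hx => by
    obtain ⟨h1, h2⟩ := abs_le.mp hx
    simp only [hcdef]
    rw [min_eq_left h2, max_eq_left h1]
  have hclip : ∀ x y : ℝ, |c x - c y| ≤ |x - y| := by
    intro x y
    have h1 : |c x - c y| ≤ |min x R - min y R| := abs_max_sub_max_le_abs _ _ _
    have h2 : |min x R - min y R| ≤ max |x - y| |R - R| := abs_min_sub_min_le_max _ _ _ _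
    rw [sub_self, abs_zero, max_eq_left (abs_nonneg _)] at h2
    exact h1.trans h2
  -- extensions of the data to all of ℝ
  set g' : ℝ → ℝ := fun t => g (p t) with hg'def
  have hg'c : Continuous g' := hg.comp_continuous hpc hpmem
  have hg'le : ∀ t, |g' t| ≤ ng := fun t => hngub ⟨p t, hpmem t, rfl⟩
  set G' : ℝ → ℝ → ℝ := fun t s => G (p t) (p s) with hG'def
  have hG'c : Continuous fun q : ℝ × ℝ => G' q.1 q.2 :=
    hG.comp_continuous ((hpc.comp continuous_fst).prodMk (hpc.comp continuous_snd))
      fun q => ⟨hpmem _, hpmem _⟩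
  set f' : ℝ → ℝ → ℝ → ℝ := fun t u v => f (p t) u v with hf'def
  have hf'c : Continuous fun q : ℝ × ℝ × ℝ => f' q.1 q.2.1 q.2.2 :=
    hfc.comp_continuous ((hpc.comp continuous_fst).prodMk continuous_snd)
      fun q => ⟨hpmem _, mem_univ _, mem_univ _⟩
  set φ' : ℝ → ℝ := fun s => p (φ (p s)) with hφ'def
  have hφ'c : Continuous φ' := hpc.comp (hφc.comp_continuous hpc hpmem)
  have hφ'mem : ∀ s, φ' s ∈ Icc (0:ℝ) a := fun s => hpmem _
  have hφ'eq : ∀ s ∈ Icc (0:ℝ) a, φ' s = φ s := fun s hs => by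
    simp only [hφ'def]
    rw [hpeq s hs, hpeq _ (hφm hs)]
  -- the integrand associated to a bounded continuous function
  have hF2 : ∀ u : ℝ →ᵇ ℝ, Continuous (fun s => f' s (c (u s)) (c (u (φ' s)))) := by
    intro u
    have hm : Continuous fun s : ℝ => (s, (c (u s), c (u (φ' s)))) :=
      continuous_id.prodMk ((hcc.comp (u.continuous)).prodMk
        (hcc.comp (u.continuous.comp hφ'c)))
    exact hf'c.comp hm
  have hF2le : ∀ (u : ℝ →ᵇ ℝ) (s : ℝ), |f' s (c (u s)) (c (u (φ' s)))| ≤ M := by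
    intro u s
    exact hbound (p s) (hpmem s) _ _ (hcabs _) (hcabs _)
  have hGtc : ∀ t : ℝ, Continuous (fun s => G' t s) := fun t =>
    hG'c.comp (continuous_const.prodMk continuous_id)
  have hGint : ∀ t : ℝ, (∫ s in (0:ℝ)..a, |G' t s|) ≤ M0 := by
    intro t
    have : (∫ s in (0:ℝ)..a, |G' t s|) = ∫ s in (0:ℝ)..a, |G (p t) s| := by
      apply intervalIntegral.integral_congr
      intro s hs
      rw [Set.uIcc_of_le ha'] at hs
      simp only [hG'def]
      rw [hpeq s hs]
    rw [this]
    exact hM0ub ⟨p t, hpmem t, rfl⟩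
  have hIntInteg : ∀ (u : ℝ →ᵇ ℝ) (t : ℝ),
      IntervalIntegrable (fun s => G' t s * f' s (c (u s)) (c (u (φ' s)))) volume 0 a :=
    fun u t => ((hGtc t).mul (hF2 u)).intervalIntegrable _ _
  have key_cont : ∀ u : ℝ →ᵇ ℝ,
      Continuous (fun t => ∫ s in (0:ℝ)..a, G' t s * f' s (c (u s)) (c (u (φ' s)))) := by
    intro u
    apply intervalIntegral.continuous_parametric_intervalIntegral_of_continuous'
    have : Continuous fun q : ℝ × ℝ => G' q.1 q.2 * f' q.2 (c (u q.2)) (c (u (φ' q.2))) :=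
      hG'c.mul ((hF2 u).comp continuous_snd)
    exact this
  have hTbound : ∀ (u : ℝ →ᵇ ℝ) (t : ℝ),
      |∫ s in (0:ℝ)..a, G' t s * f' s (c (u s)) (c (u (φ' s)))| ≤ M0 * M := by
    intro u t
    have h1 : |∫ s in (0:ℝ)..a, G' t s * f' s (c (u s)) (c (u (φ' s)))|
        ≤ ∫ s in (0:ℝ)..a, |G' t s * f' s (c (u s)) (c (u (φ' s)))| :=
      intervalIntegral.abs_integral_le_integral_abs ha'
    have h2 : (∫ s in (0:ℝ)..a, |G' t s * f' s (c (u s)) (c (u (φ' s)))|)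
        ≤ ∫ s in (0:ℝ)..a, |G' t s| * M := by
      apply intervalIntegral.integral_mono_on ha'
      · exact (((hGtc t).mul (hF2 u)).abs).intervalIntegrable _ _
      · exact ((hGtc t).abs.mul continuous_const).intervalIntegrable _ _
      · intro s _
        rw [abs_mul]
        exact mul_le_mul_of_nonneg_left (hF2le u s) (abs_nonneg _)
    have h3 : (∫ s in (0:ℝ)..a, |G' t s| * M) = (∫ s in (0:ℝ)..a, |G' t s|) * M :=
      intervalIntegral.integral_mul_const _ _
    have h4 : (∫ s in (0:ℝ)..a, |G' t s|) * M ≤ M0 * M :=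
      mul_le_mul_of_nonneg_right (hGint t) hM.le
    calc |∫ s in (0:ℝ)..a, G' t s * f' s (c (u s)) (c (u (φ' s)))|
        ≤ ∫ s in (0:ℝ)..a, |G' t s * f' s (c (u s)) (c (u (φ' s)))| := h1
      _ ≤ ∫ s in (0:ℝ)..a, |G' t s| * M := h2
      _ = (∫ s in (0:ℝ)..a, |G' t s|) * M := h3
      _ ≤ M0 * M := h4
  -- the Picard operator
  set T : (ℝ →ᵇ ℝ) → (ℝ →ᵇ ℝ) := fun u =>
    BoundedContinuousFunction.ofNormedAddCommGroup
      (fun t => g' t + ∫ s in (0:ℝ)..a, G' t s * f' s (c (u s)) (c (u (φ' s))))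
      (hg'c.add (key_cont u)) R
      (fun t => by
        rw [Real.norm_eq_abs]
        exact (abs_add_le _ _).trans (add_le_add (hg'le t) (hTbound u t))) with hTdef
  have hTapp : ∀ (u : ℝ →ᵇ ℝ) (t : ℝ),
      T u t = g' t + ∫ s in (0:ℝ)..a, G' t s * f' s (c (u s)) (c (u (φ' s))) := fun u t => rfl
  -- contraction
  have hqnn : 0 ≤ (L1 + L2) * M0 := mul_nonneg (add_nonneg hL1 hL2) hM0nn
  have hcontr : ContractingWith ⟨(L1 + L2) * M0, hqnn⟩ T := by
    constructor
    · exact_mod_cast hq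
    · apply LipschitzWith.of_dist_le_mul
      intro u v
      have hD : (0:ℝ) ≤ dist u v := dist_nonneg
      rw [BoundedContinuousFunction.dist_le (by positivity)]
      intro t
      have hsub : T u t - T v t = ∫ s in (0:ℝ)..a,
          (G' t s * f' s (c (u s)) (c (u (φ' s))) - G' t s * f' s (c (v s)) (c (v (φ' s)))) := by
        rw [hTapp, hTapp, add_sub_add_left_eq_sub,
          intervalIntegral.integral_sub (hIntInteg u t) (hIntInteg v t)]
      have hptwise : ∀ s ∈ Icc (0:ℝ) a,
          |G' t s * f' s (c (u s)) (c (u (φ' s))) - G' t s * f' s (c (v s)) (c (v (φ' s)))|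
            ≤ |G' t s| * ((L1 + L2) * dist u v) := by
        intro s _
        rw [← mul_sub, abs_mul]
        apply mul_le_mul_of_nonneg_left _ (abs_nonneg _)
        have hlip := hLip (p s) (hpmem s) (c (v s)) (c (u s)) (c (v (φ' s))) (c (u (φ' s)))
          (hcabs _) (hcabs _) (hcabs _) (hcabs _)
        have e1 : |c (u s) - c (v s)| ≤ dist u v :=
          (hclip _ _).trans (by rw [← Real.dist_eq]; exact
            BoundedContinuousFunction.dist_coe_le_dist s)
        have e2 : |c (u (φ' s)) - c (v (φ' s))| ≤ dist u v :=
          (hclip _ _).trans (by rw [← Real.dist_eq]; exact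
            BoundedContinuousFunction.dist_coe_le_dist (φ' s))
        simp only [hf'def]
        calc |f (p s) (c (u s)) (c (u (φ' s))) - f (p s) (c (v s)) (c (v (φ' s)))|
            ≤ L1 * |c (u s) - c (v s)| + L2 * |c (u (φ' s)) - c (v (φ' s))| := hlip
          _ ≤ L1 * dist u v + L2 * dist u v :=
              add_le_add (mul_le_mul_of_nonneg_left e1 hL1) (mul_le_mul_of_nonneg_left e2 hL2)
          _ = (L1 + L2) * dist u v := by ring
      have hkey : |T u t - T v t| ≤ ((L1 + L2) * M0) * dist u v := by
        rw [hsub]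
        have i1 : IntervalIntegrable (fun s => |G' t s * f' s (c (u s)) (c (u (φ' s)))
            - G' t s * f' s (c (v s)) (c (v (φ' s)))|) volume 0 a :=
          ((((hGtc t).mul (hF2 u)).sub ((hGtc t).mul (hF2 v))).abs).intervalIntegrable _ _
        have i2 : IntervalIntegrable (fun s => |G' t s| * ((L1 + L2) * dist u v)) volume 0 a :=
          ((hGtc t).abs.mul continuous_const).intervalIntegrable _ _
        calc |∫ s in (0:ℝ)..a, (G' t s * f' s (c (u s)) (c (u (φ' s)))
                - G' t s * f' s (c (v s)) (c (v (φ' s))))|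
            ≤ ∫ s in (0:ℝ)..a, |G' t s * f' s (c (u s)) (c (u (φ' s)))
                - G' t s * f' s (c (v s)) (c (v (φ' s)))| :=
              intervalIntegral.abs_integral_le_integral_abs ha'
          _ ≤ ∫ s in (0:ℝ)..a, |G' t s| * ((L1 + L2) * dist u v) :=
              intervalIntegral.integral_mono_on ha' i1 i2 hptwise
          _ = (∫ s in (0:ℝ)..a, |G' t s|) * ((L1 + L2) * dist u v) :=
              intervalIntegral.integral_mul_const _ _
          _ ≤ M0 * ((L1 + L2) * dist u v) :=
              mul_le_mul_of_nonneg_right (hGint t) (by positivity)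
          _ = ((L1 + L2) * M0) * dist u v := by ring
      rw [Real.dist_eq]
      exact le_trans hkey (le_of_eq (by rfl))
  -- the fixed point
  have hne : Nonempty (ℝ →ᵇ ℝ) := ⟨0⟩
  set u : ℝ →ᵇ ℝ := ContractingWith.fixedPoint T hcontr with hudef
  have hufix : T u = u := hcontr.fixedPoint_isFixedPt
  have hub : ∀ x, |u x| ≤ R := by
    intro x
    conv_lhs => rw [← hufix]
    rw [hTapp]
    exact (abs_add_le _ _).trans (add_le_add (hg'le x) (hTbound u x))
  have hcu : ∀ x : ℝ, c (u x) = u x := fun x => hceq _ (hub x)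
  refine ⟨⇑u, ⟨u.continuous.continuousOn, fun t _ => hub t, ?_⟩, ?_⟩
  · intro t ht
    conv_lhs => rw [← hufix]
    rw [hTapp]
    congr 1
    · simp only [hg'def]; rw [hpeq t ht]
    · apply intervalIntegral.integral_congr
      intro s hs
      rw [uIcc_of_le ha'] at hs
      simp only [hG'def, hf'def]
      rw [hcu, hcu, hφ'eq s hs, hpeq t ht, hpeq s hs]
  · rintro u2 ⟨hu2c, hu2b, hu2eq⟩
    set u2' : ℝ →ᵇ ℝ := BoundedContinuousFunction.ofNormedAddCommGroup
      (fun t => u2 (p t)) (hu2c.comp_continuous hpc hpmem) R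
      (fun t => by rw [Real.norm_eq_abs]; exact hu2b _ (hpmem t)) with hu2'def
    have hu2'app : ∀ t, u2' t = u2 (p t) := fun t => rfl
    have hfix2 : T u2' = u2' := by
      ext t
      rw [hTapp, hu2'app, hu2eq (p t) (hpmem t)]
      congr 1
      apply intervalIntegral.integral_congr
      intro s hs
      rw [uIcc_of_le ha'] at hs
      simp only [hG'def, hf'def, hu2'app]
      rw [hpeq _ (hφ'mem s), hφ'eq s hs, hpeq s hs,
        hceq _ (hu2b s hs), hceq _ (hu2b _ (hφm hs))]
    have huu : u2' = u := hcontr.fixedPoint_unique hfix2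
    intro t ht
    have h := congrArg (fun w : ℝ →ᵇ ℝ => w t) huu
    simp only [hu2'app, hpeq t ht] at h
    exact h
end

section
/- Assume (ii) |f(t,u,v)| ≤ M for all (t,u,v) ∈ D_M; (iii) f satisfies the Lipschitz conditions |f(t,u2,v2) − f(t,u1,v1)| ≤ L1|u2 − u1| + L2|v2 − v1| for all (t,u1,v1), (t,u2,v2) ∈ D_M with constants L1, L2 ≥ 0; and (iv) q := (L1 + L2) M0 < 1, where here M0 = max_{t∈[0,1]} ∫₀¹ |G(t,s)| ds, and the domain D_M is taken with a = 1 and this g and M0. Then there exists exactly one three times continuously differentiable function u: [0,1] → ℝ satisfying u'''(t) = f(t, u(t), u(φ(t))) for all t ∈ [0,1], the boundary conditions u(0) = b1, u'(0) = b2, u'(1) = b3, and the bound |u(t)| ≤ ‖g‖ + M0 M for all t ∈ [0,1]. -/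
open Set MeasureTheory

namespace TOF

open intervalIntegral
noncomputable def pr (t : ℝ) : ℝ := min 1 (max 0 t)

lemma pr_mem (t : ℝ) : pr t ∈ Icc (0:ℝ) 1 := by
  constructor
  · exact le_min (by norm_num) (le_max_left 0 t)
  · exact min_le_left _ _

lemma pr_eq {t : ℝ} (ht : t ∈ Icc (0:ℝ) 1) : pr t = t := by
  simp [pr, max_eq_right ht.1, min_eq_right ht.2]

lemma continuous_pr : Continuous pr :=
  continuous_const.min (continuous_const.max continuous_id)

noncomputable def cl (R x : ℝ) : ℝ := min R (max x (-R))

lemma cl_abs_le {R : ℝ} (hR : 0 ≤ R) (x : ℝ) : |cl R x| ≤ R := by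
  rw [abs_le]
  constructor
  · exact le_min (by linarith) (le_max_right _ _)
  · exact min_le_left _ _

lemma cl_eq {R x : ℝ} (hx : |x| ≤ R) : cl R x = x := by
  rw [abs_le] at hx
  simp [cl, max_eq_left hx.1, min_eq_right hx.2]

lemma cl_lip (R a b : ℝ) : |cl R a - cl R b| ≤ |a - b| := by
  have h1 : |max a (-R) - max b (-R)| ≤ |a - b| := abs_max_sub_max_le_abs _ _ _
  have h2 : |cl R a - cl R b| ≤ max |R - R| |max a (-R) - max b (-R)| := by
    rw [show cl R a = min R (max a (-R)) from rfl, show cl R b = min R (max b (-R)) from rfl]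
    exact abs_min_sub_min_le_max _ _ _ _
  refine h2.trans (max_le (by simp) h1)

lemma continuous_cl (R : ℝ) : Continuous (cl R) :=
  continuous_const.min (continuous_id.max continuous_const)

lemma continuous_G01 (t : ℝ) : Continuous (fun s => G01 t s) := by
  apply Continuous.if_le (by fun_prop) (by fun_prop) continuous_id continuous_const
  intro s hs; simp only [id_eq] at hs; subst hs; ring

noncomputable def AI (F : ℝ → ℝ) (t : ℝ) : ℝ := ∫ s in (0:ℝ)..t, s * F s
noncomputable def BI (F : ℝ → ℝ) (t : ℝ) : ℝ := ∫ s in (0:ℝ)..t, s ^ 2 * F s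
noncomputable def CI (F : ℝ → ℝ) (t : ℝ) : ℝ := ∫ s in (0:ℝ)..t, (s - 1) * F s
noncomputable def HH (F : ℝ → ℝ) (t : ℝ) : ℝ :=
  (t ^ 2 - 2 * t) / 2 * AI F t + BI F t / 2 + t ^ 2 / 2 * (CI F 1 - CI F t)
noncomputable def HH1 (F : ℝ → ℝ) (t : ℝ) : ℝ := (t - 1) * AI F t + t * (CI F 1 - CI F t)
noncomputable def HH2 (F : ℝ → ℝ) (t : ℝ) : ℝ := AI F t + (CI F 1 - CI F t)

variable {F : ℝ → ℝ} (hF : Continuous F)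

include hF in
lemma hasDerivAt_AI (t : ℝ) : HasDerivAt (AI F) (t * F t) t :=
  ((continuous_id.mul hF).integral_hasStrictDerivAt 0 t).hasDerivAt

include hF in
lemma hasDerivAt_BI (t : ℝ) : HasDerivAt (BI F) (t ^ 2 * F t) t :=
  (((continuous_pow 2).mul hF).integral_hasStrictDerivAt 0 t).hasDerivAt

include hF in
lemma hasDerivAt_CI (t : ℝ) : HasDerivAt (CI F) ((t - 1) * F t) t :=
  (((continuous_id.sub continuous_const).mul hF).integral_hasStrictDerivAt 0 t).hasDerivAt

include hF in
lemma hasDerivAt_HH (t : ℝ) : HasDerivAt (HH F) (HH1 F t) t := by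
  have h1 := ((hasDerivAt_id t).pow 2 |>.sub ((hasDerivAt_id t).const_mul 2)).div_const 2
    |>.mul (hasDerivAt_AI hF t)
  have h2 := (hasDerivAt_BI hF t).div_const 2
  have h3 := (((hasDerivAt_id t).pow 2).div_const 2).mul
    ((hasDerivAt_const t (CI F 1)).sub (hasDerivAt_CI hF t))
  have := (h1.add h2).add h3
  refine this.congr_deriv ?_
  unfold HH1
  simp only [id_eq, Pi.sub_apply, Pi.pow_apply, Pi.mul_apply]
  push_cast
  ring

include hF in
lemma hasDerivAt_HH1 (t : ℝ) : HasDerivAt (HH1 F) (HH2 F t) t := by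
  have h1 := ((hasDerivAt_id t).sub_const 1).mul (hasDerivAt_AI hF t)
  have h3 := (hasDerivAt_id t).mul ((hasDerivAt_const t (CI F 1)).sub (hasDerivAt_CI hF t))
  have := h1.add h3
  refine this.congr_deriv ?_
  unfold HH2
  simp only [id_eq, Pi.sub_apply, Pi.pow_apply, Pi.mul_apply]
  ring

include hF in
lemma hasDerivAt_HH2 (t : ℝ) : HasDerivAt (HH2 F) (F t) t := by
  have := (hasDerivAt_AI hF t).add ((hasDerivAt_const t (CI F 1)).sub (hasDerivAt_CI hF t))
  refine this.congr_deriv ?_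
  ring

lemma AI_zero : AI F 0 = 0 := integral_same
lemma CI_zero : CI F 0 = 0 := integral_same
lemma HH_zero : HH F 0 = 0 := by simp [HH, AI_zero, CI_zero, BI]
lemma HH1_zero : HH1 F 0 = 0 := by simp [HH1, AI_zero]
lemma HH1_one : HH1 F 1 = 0 := by simp [HH1]

include hF in
lemma HH_eq {t : ℝ} (ht : t ∈ Icc (0:ℝ) 1) :
    HH F t = ∫ s in (0:ℝ)..1, G01 t s * F s := by
  have hInt : ∀ a b : ℝ, IntervalIntegrable (fun s => G01 t s * F s) volume a b :=
    fun a b => ((continuous_G01 t).mul hF).intervalIntegrable a b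
  have hsplit : (∫ s in (0:ℝ)..t, G01 t s * F s) + ∫ s in t..1, G01 t s * F s
      = ∫ s in (0:ℝ)..1, G01 t s * F s :=
    integral_add_adjacent_intervals (hInt 0 t) (hInt t 1)
  have h1 : (∫ s in (0:ℝ)..t, G01 t s * F s)
      = (t ^ 2 - 2 * t) / 2 * AI F t + BI F t / 2 := by
    have e1 : (∫ s in (0:ℝ)..t, G01 t s * F s)
        = ∫ s in (0:ℝ)..t, ((t ^ 2 - 2 * t) / 2 * (s * F s) + (1 / 2) * (s ^ 2 * F s)) := by
      apply integral_congr
      intro s hs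
      rw [uIcc_of_le ht.1] at hs
      simp only [G01, if_pos hs.2]
      ring
    rw [e1, intervalIntegral.integral_add (Continuous.intervalIntegrable (by fun_prop) _ _)
      (Continuous.intervalIntegrable (by fun_prop) _ _),
      intervalIntegral.integral_const_mul, intervalIntegral.integral_const_mul]
    unfold AI BI; ring
  have h2 : (∫ s in t..1, G01 t s * F s) = t ^ 2 / 2 * (CI F 1 - CI F t) := by
    have e2 : (∫ s in t..1, G01 t s * F s)
        = ∫ s in t..1, t ^ 2 / 2 * ((s - 1) * F s) := by
      apply integral_congr
      intro s hs
      rw [uIcc_of_le ht.2] at hs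
      have : G01 t s = t ^ 2 / 2 * (s - 1) := by
        unfold G01
        split_ifs with h
        · have hst : s = t := le_antisymm h hs.1
          subst hst; ring
        · rfl
      show G01 t s * F s = _
      rw [this]; ring
    rw [e2, intervalIntegral.integral_const_mul]
    have e3 : (∫ s in t..1, (s - 1) * F s) = CI F 1 - CI F t := by
      unfold CI
      rw [integral_interval_sub_left (Continuous.intervalIntegrable (by fun_prop) _ _)
        (Continuous.intervalIntegrable (by fun_prop) _ _)]
    rw [e3]
  rw [← hsplit, h1, h2]
  unfold HH; ring

include hF in
lemma G_int_bound {K : ℝ} (hK : ∀ s ∈ Icc (0:ℝ) 1, |F s| ≤ K) {t : ℝ} (ht : t ∈ Icc (0:ℝ) 1) :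
    |∫ s in (0:ℝ)..1, G01 t s * F s| ≤ (∫ s in (0:ℝ)..1, |G01 t s|) * K := by
  have hKnn : 0 ≤ K := le_trans (abs_nonneg _) (hK 0 (by norm_num))
  calc |∫ s in (0:ℝ)..1, G01 t s * F s| ≤ ∫ s in (0:ℝ)..1, |G01 t s * F s| :=
        abs_integral_le_integral_abs (by norm_num)
    _ ≤ ∫ s in (0:ℝ)..1, |G01 t s| * K := by
        apply integral_mono_on (by norm_num)
          (((continuous_G01 t).mul hF).abs.intervalIntegrable 0 1)
          (((continuous_G01 t).abs.mul continuous_const).intervalIntegrable 0 1)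
        intro s hs
        show |G01 t s * F s| ≤ |G01 t s| * K
        rw [abs_mul]
        exact mul_le_mul_of_nonneg_left (hK s hs) (abs_nonneg _)
    _ = (∫ s in (0:ℝ)..1, |G01 t s|) * K := integral_mul_const _ _


include hF in
lemma continuous_HH : Continuous (HH F) :=
  continuous_iff_continuousAt.2 fun t => (hasDerivAt_HH hF t).continuousAt

lemma continuous_gq (b1 b2 b3 : ℝ) : Continuous (gq b1 b2 b3) := by
  unfold gq; fun_prop

lemma hasDerivAt_gq (b1 b2 b3 t : ℝ) :
    HasDerivAt (gq b1 b2 b3) (b2 + (b3 - b2) * t) t := by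
  have h := ((hasDerivAt_const t b1).add ((hasDerivAt_id t).const_mul b2)).add
    (((hasDerivAt_id t).pow 2).const_mul ((b3 - b2) / 2))
  refine h.congr_deriv ?_
  simp only [id_eq]
  push_cast
  ring

lemma derivWithin_eq_of_hasDerivAt {v v' : ℝ → ℝ} (h : ∀ t, HasDerivAt v (v' t) t) {t : ℝ}
    (ht : t ∈ Icc (0:ℝ) 1) : derivWithin v (Icc 0 1) t = v' t :=
  ((h t).hasDerivWithinAt).derivWithin (uniqueDiffOn_Icc_zero_one t ht)

lemma contDiff_of_chain {u u1 u2 u3 : ℝ → ℝ} (h1 : ∀ t, HasDerivAt u (u1 t) t)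
    (h2 : ∀ t, HasDerivAt u1 (u2 t) t) (h3 : ∀ t, HasDerivAt u2 (u3 t) t)
    (h3c : Continuous u3) : ContDiff ℝ 3 u := by
  have e1 : deriv u = u1 := funext fun t => (h1 t).deriv
  have e2 : deriv u1 = u2 := funext fun t => (h2 t).deriv
  have e3 : deriv u2 = u3 := funext fun t => (h3 t).deriv
  have c2 : ContDiff ℝ 1 u2 := contDiff_one_iff_deriv.2
    ⟨fun t => (h3 t).differentiableAt, by rw [e3]; exact h3c⟩
  have c1 : ContDiff ℝ 2 u1 := by
    rw [show (2 : WithTop ℕ∞) = 1 + 1 by norm_num, contDiff_succ_iff_deriv]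
    exact ⟨fun t => (h2 t).differentiableAt, by simp, by rw [e2]; exact c2⟩
  rw [show (3 : WithTop ℕ∞) = 2 + 1 by norm_num, contDiff_succ_iff_deriv]
  exact ⟨fun t => (h1 t).differentiableAt, by simp, by rw [e1]; exact c1⟩

noncomputable def Uext (u : C(↥(Icc (0:ℝ) 1), ℝ)) (t : ℝ) : ℝ := u ⟨pr t, pr_mem t⟩

lemma continuous_Uext (u : C(↥(Icc (0:ℝ) 1), ℝ)) : Continuous (Uext u) :=
  u.continuous.comp (continuous_pr.subtype_mk _)

noncomputable def FF (f : ℝ → ℝ → ℝ → ℝ) (φ : ℝ → ℝ) (R : ℝ)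
    (u : C(↥(Icc (0:ℝ) 1), ℝ)) (s : ℝ) : ℝ :=
  f (pr s) (cl R (Uext u s)) (cl R (Uext u (φ (pr s))))

lemma continuous_FF {f : ℝ → ℝ → ℝ → ℝ} {φ : ℝ → ℝ}
    (hfc : ContinuousOn (fun p : ℝ × ℝ × ℝ => f p.1 p.2.1 p.2.2)
      (Icc 0 1 ×ˢ (univ : Set ℝ) ×ˢ (univ : Set ℝ)))
    (hφc : ContinuousOn φ (Icc 0 1)) (R : ℝ) (u : C(↥(Icc (0:ℝ) 1), ℝ)) :
    Continuous (FF f φ R u) := by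
  have hΦ : Continuous fun s => φ (pr s) := hφc.comp_continuous continuous_pr pr_mem
  have hcont : Continuous fun s : ℝ =>
      ((pr s, cl R (Uext u s), cl R (Uext u (φ (pr s)))) : ℝ × ℝ × ℝ) :=
    continuous_pr.prodMk (((continuous_cl R).comp (continuous_Uext u)).prodMk
      ((continuous_cl R).comp ((continuous_Uext u).comp hΦ)))
  have hmem : ∀ s : ℝ, ((pr s, cl R (Uext u s), cl R (Uext u (φ (pr s)))) : ℝ × ℝ × ℝ)
      ∈ Icc (0:ℝ) 1 ×ˢ (univ : Set ℝ) ×ˢ (univ : Set ℝ) :=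
    fun s => Set.mk_mem_prod (pr_mem s) (Set.mk_mem_prod trivial trivial)
  exact hfc.comp_continuous hcont hmem

end TOF

open TOF in
/-- Under the assumptions (ii) `|f| ≤ M` on `D_M`, (iii) the Lipschitz conditions on `D_M`, and
(iv) `q = (L1+L2) M0 < 1`, the boundary value problem `u''' = f(t, u(t), u(φ(t)))`,
`u(0) = b1`, `u'(0) = b2`, `u'(1) = b3` has exactly one three times continuously differentiable
solution on `[0,1]`, and it satisfies `|u(t)| ≤ ‖g‖ + M0 M` on `[0,1]`. -/
theorem existence_uniqueness_third_order_fde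
    (b1 b2 b3 : ℝ) (φ : ℝ → ℝ) (f : ℝ → ℝ → ℝ → ℝ)
    (hφc : ContinuousOn φ (Icc 0 1)) (hφm : MapsTo φ (Icc 0 1) (Icc 0 1))
    (hfc : ContinuousOn (fun p : ℝ × ℝ × ℝ => f p.1 p.2.1 p.2.2)
      (Icc 0 1 ×ˢ (univ : Set ℝ) ×ˢ (univ : Set ℝ)))
    (M0 : ℝ) (hM0 : IsGreatest ((fun t => ∫ s in (0:ℝ)..1, |G01 t s|) '' Icc 0 1) M0)
    (ng : ℝ) (hng : IsGreatest ((fun t => |gq b1 b2 b3 t|) '' Icc 0 1) ng)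
    (M : ℝ) (hM : 0 < M)
    (hbound : ∀ t ∈ Icc (0:ℝ) 1, ∀ u v : ℝ,
      |u| ≤ ng + M0 * M → |v| ≤ ng + M0 * M → |f t u v| ≤ M)
    (L1 L2 : ℝ) (hL1 : 0 ≤ L1) (hL2 : 0 ≤ L2)
    (hLip : ∀ t ∈ Icc (0:ℝ) 1, ∀ u1 u2 v1 v2 : ℝ,
      |u1| ≤ ng + M0 * M → |u2| ≤ ng + M0 * M →
      |v1| ≤ ng + M0 * M → |v2| ≤ ng + M0 * M →
      |f t u2 v2 - f t u1 v1| ≤ L1 * |u2 - u1| + L2 * |v2 - v1|)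
    (hq : (L1 + L2) * M0 < 1) :
    ∃ u : ℝ → ℝ,
      (ContDiffOn ℝ 3 u (Icc 0 1) ∧
        (∀ t ∈ Icc (0:ℝ) 1,
          derivWithin (derivWithin (derivWithin u (Icc 0 1)) (Icc 0 1)) (Icc 0 1) t
            = f t (u t) (u (φ t))) ∧
        u 0 = b1 ∧ derivWithin u (Icc 0 1) 0 = b2 ∧ derivWithin u (Icc 0 1) 1 = b3 ∧
        (∀ t ∈ Icc (0:ℝ) 1, |u t| ≤ ng + M0 * M)) ∧
      ∀ u2 : ℝ → ℝ,
        (ContDiffOn ℝ 3 u2 (Icc 0 1) ∧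
          (∀ t ∈ Icc (0:ℝ) 1,
            derivWithin (derivWithin (derivWithin u2 (Icc 0 1)) (Icc 0 1)) (Icc 0 1) t
              = f t (u2 t) (u2 (φ t))) ∧
          u2 0 = b1 ∧ derivWithin u2 (Icc 0 1) 0 = b2 ∧ derivWithin u2 (Icc 0 1) 1 = b3 ∧
          (∀ t ∈ Icc (0:ℝ) 1, |u2 t| ≤ ng + M0 * M)) →
        EqOn u2 u (Icc 0 1) := by
  -- basic positivity facts
  have hM0t : ∀ t ∈ Icc (0:ℝ) 1, (∫ s in (0:ℝ)..1, |G01 t s|) ≤ M0 :=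
    fun t ht => hM0.2 ⟨t, ht, rfl⟩
  have hM0nn : 0 ≤ M0 := by
    obtain ⟨t, ht, hteq⟩ := hM0.1
    have h0 : 0 ≤ ∫ s in (0:ℝ)..1, |G01 t s| :=
      intervalIntegral.integral_nonneg (by norm_num) (fun s _ => abs_nonneg _)
    rw [← hteq]; exact h0
  have hngt : ∀ t ∈ Icc (0:ℝ) 1, |gq b1 b2 b3 t| ≤ ng := fun t ht => hng.2 ⟨t, ht, rfl⟩
  have hngnn : 0 ≤ ng := by
    obtain ⟨t, ht, hteq⟩ := hng.1; rw [← hteq]; exact abs_nonneg _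
  set R := ng + M0 * M with hRdef
  have hRnn : 0 ≤ R := add_nonneg hngnn (mul_nonneg hM0nn hM.le)
  have hFFc : ∀ u : C(↥(Icc (0:ℝ) 1), ℝ), Continuous (FF f φ R u) :=
    fun u => continuous_FF hfc hφc R u
  have hFb : ∀ (u : C(↥(Icc (0:ℝ) 1), ℝ)) (s : ℝ), |FF f φ R u s| ≤ M := fun u s =>
    hbound (pr s) (pr_mem s) _ _ (cl_abs_le hRnn _) (cl_abs_le hRnn _)
  have hFlip : ∀ u v : C(↥(Icc (0:ℝ) 1), ℝ), ∀ s : ℝ,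
      |FF f φ R u s - FF f φ R v s| ≤ (L1 + L2) * dist u v := by
    intro u v s
    have h := hLip (pr s) (pr_mem s) (cl R (Uext v s)) (cl R (Uext u s))
      (cl R (Uext v (φ (pr s)))) (cl R (Uext u (φ (pr s))))
      (cl_abs_le hRnn _) (cl_abs_le hRnn _) (cl_abs_le hRnn _) (cl_abs_le hRnn _)
    have h1 : |Uext u s - Uext v s| ≤ dist u v := by
      rw [← Real.dist_eq]; exact ContinuousMap.dist_apply_le_dist _
    have h2 : |Uext u (φ (pr s)) - Uext v (φ (pr s))| ≤ dist u v := by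
      rw [← Real.dist_eq]; exact ContinuousMap.dist_apply_le_dist _
    calc |FF f φ R u s - FF f φ R v s|
        ≤ L1 * |cl R (Uext u s) - cl R (Uext v s)|
          + L2 * |cl R (Uext u (φ (pr s))) - cl R (Uext v (φ (pr s)))| := h
      _ ≤ L1 * dist u v + L2 * dist u v :=
          add_le_add (mul_le_mul_of_nonneg_left ((cl_lip _ _ _).trans h1) hL1)
            (mul_le_mul_of_nonneg_left ((cl_lip _ _ _).trans h2) hL2)
      _ = (L1 + L2) * dist u v := by ring
  -- the operator T
  set T : C(↥(Icc (0:ℝ) 1), ℝ) → C(↥(Icc (0:ℝ) 1), ℝ) := fun u =>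
    ⟨fun x => gq b1 b2 b3 ↑x + HH (FF f φ R u) ↑x,
      ((continuous_gq b1 b2 b3).add (continuous_HH (hFFc u))).comp continuous_subtype_val⟩
    with hTdef
  have hTapp : ∀ (u : C(↥(Icc (0:ℝ) 1), ℝ)) (x : ↥(Icc (0:ℝ) 1)),
      T u x = gq b1 b2 b3 ↑x + HH (FF f φ R u) ↑x := fun u x => rfl
  have hL12 : 0 ≤ L1 + L2 := by linarith
  have hq0 : 0 ≤ (L1 + L2) * M0 := mul_nonneg hL12 hM0nn
  have hdistT : ∀ u v, dist (T u) (T v) ≤ (L1 + L2) * M0 * dist u v := by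
    intro u v
    rw [ContinuousMap.dist_le (mul_nonneg hq0 dist_nonneg)]
    intro x
    have hx : (↑x : ℝ) ∈ Icc (0:ℝ) 1 := x.2
    have hsub : Continuous fun s => FF f φ R u s - FF f φ R v s := (hFFc u).sub (hFFc v)
    have key : HH (FF f φ R u) ↑x - HH (FF f φ R v) ↑x
        = ∫ s in (0:ℝ)..1, G01 ↑x s * (FF f φ R u s - FF f φ R v s) := by
      rw [HH_eq (hFFc u) hx, HH_eq (hFFc v) hx,
        ← intervalIntegral.integral_sub (f := fun s => G01 ↑x s * FF f φ R u s)
          (g := fun s => G01 ↑x s * FF f φ R v s)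
          (((continuous_G01 _).mul (hFFc u)).intervalIntegrable _ _)
          (((continuous_G01 _).mul (hFFc v)).intervalIntegrable _ _)]
      simp only [mul_sub]
    have hb := G_int_bound hsub (K := (L1 + L2) * dist u v) (fun s _ => hFlip u v s) hx
    rw [Real.dist_eq, hTapp, hTapp]
    have e : gq b1 b2 b3 ↑x + HH (FF f φ R u) ↑x - (gq b1 b2 b3 ↑x + HH (FF f φ R v) ↑x)
        = HH (FF f φ R u) ↑x - HH (FF f φ R v) ↑x := by ring
    rw [e, key]
    calc |∫ s in (0:ℝ)..1, G01 ↑x s * (FF f φ R u s - FF f φ R v s)|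
        ≤ (∫ s in (0:ℝ)..1, |G01 ↑x s|) * ((L1 + L2) * dist u v) := hb
      _ ≤ M0 * ((L1 + L2) * dist u v) :=
          mul_le_mul_of_nonneg_right (hM0t _ hx) (mul_nonneg hL12 dist_nonneg)
      _ = (L1 + L2) * M0 * dist u v := by ring
  have hcontr : ContractingWith ⟨(L1 + L2) * M0, hq0⟩ T := by
    constructor
    · exact NNReal.coe_lt_coe.mp hq
    · exact LipschitzWith.of_dist_le_mul hdistT
  set uf := ContractingWith.fixedPoint T hcontr with hufdef
  have huf : T uf = uf := hcontr.fixedPoint_isFixedPt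
  set F₀ := FF f φ R uf with hF0def
  have hFc0 : Continuous F₀ := hFFc uf
  set u : ℝ → ℝ := fun t => gq b1 b2 b3 t + HH F₀ t with hudef
  have huuf : ∀ x : ↥(Icc (0:ℝ) 1), u ↑x = uf x := by
    intro x; rw [← huf]; rfl
  have hub : ∀ t ∈ Icc (0:ℝ) 1, |u t| ≤ R := by
    intro t ht
    have h1 : |HH F₀ t| ≤ M0 * M := by
      rw [HH_eq hFc0 ht]
      exact (G_int_bound hFc0 (fun s _ => hFb uf s) ht).trans
        (mul_le_mul_of_nonneg_right (hM0t t ht) hM.le)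
    calc |u t| ≤ |gq b1 b2 b3 t| + |HH F₀ t| := abs_add_le _ _
      _ ≤ ng + M0 * M := add_le_add (hngt t ht) h1
  have hUeq : ∀ t ∈ Icc (0:ℝ) 1, Uext uf t = u t := by
    intro t ht
    show uf ⟨pr t, pr_mem t⟩ = u t
    have e : (⟨pr t, pr_mem t⟩ : ↥(Icc (0:ℝ) 1)) = ⟨t, ht⟩ := Subtype.ext (pr_eq ht)
    rw [e]; exact (huuf ⟨t, ht⟩).symm
  have hF0eq : ∀ t ∈ Icc (0:ℝ) 1, F₀ t = f t (u t) (u (φ t)) := by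
    intro t ht
    have hφt := hφm ht
    show f (pr t) (cl R (Uext uf t)) (cl R (Uext uf (φ (pr t)))) = _
    rw [pr_eq ht, hUeq t ht, hUeq (φ t) hφt, cl_eq (hub t ht), cl_eq (hub (φ t) hφt)]
  -- derivatives of u
  set P1 : ℝ → ℝ := fun t => b2 + (b3 - b2) * t + HH1 F₀ t with hP1def
  set P2 : ℝ → ℝ := fun t => (b3 - b2) + HH2 F₀ t with hP2def
  have hd1 : ∀ t, HasDerivAt u (P1 t) t := fun t =>
    (hasDerivAt_gq b1 b2 b3 t).add (hasDerivAt_HH hFc0 t)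
  have hd2 : ∀ t, HasDerivAt P1 (P2 t) t := by
    intro t
    have h := ((hasDerivAt_const t b2).add ((hasDerivAt_id t).const_mul (b3 - b2))).add
      (hasDerivAt_HH1 hFc0 t)
    refine h.congr_deriv ?_
    ring
  have hd3 : ∀ t, HasDerivAt P2 (F₀ t) t := by
    intro t
    have h := (hasDerivAt_const t (b3 - b2)).add (hasDerivAt_HH2 hFc0 t)
    refine h.congr_deriv ?_
    ring
  have hD1 : ∀ t ∈ Icc (0:ℝ) 1, derivWithin u (Icc 0 1) t = P1 t :=
    fun t ht => derivWithin_eq_of_hasDerivAt hd1 ht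
  have hD2 : ∀ t ∈ Icc (0:ℝ) 1,
      derivWithin (derivWithin u (Icc 0 1)) (Icc 0 1) t = P2 t := by
    intro t ht
    rw [derivWithin_congr (fun x hx => hD1 x hx) (hD1 t ht)]
    exact derivWithin_eq_of_hasDerivAt hd2 ht
  have hD3 : ∀ t ∈ Icc (0:ℝ) 1,
      derivWithin (derivWithin (derivWithin u (Icc 0 1)) (Icc 0 1)) (Icc 0 1) t
        = f t (u t) (u (φ t)) := by
    intro t ht
    rw [derivWithin_congr (fun x hx => hD2 x hx) (hD2 t ht)]
    rw [derivWithin_eq_of_hasDerivAt hd3 ht]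
    exact hF0eq t ht
  refine ⟨u, ⟨(contDiff_of_chain hd1 hd2 hd3 hFc0).contDiffOn, hD3, ?_, ?_, ?_, hub⟩, ?_⟩
  · show gq b1 b2 b3 0 + HH F₀ 0 = b1
    rw [HH_zero]; simp [gq]
  · rw [hD1 0 (by norm_num)]
    show b2 + (b3 - b2) * 0 + HH1 F₀ 0 = b2
    rw [HH1_zero]; ring
  · rw [hD1 1 (by norm_num)]
    show b2 + (b3 - b2) * 1 + HH1 F₀ 1 = b3
    rw [HH1_one]; ring
  -- uniqueness
  intro v hv
  obtain ⟨hv1, hv2, hv3, hv4, hv5, hv6⟩ := hv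
  set Vc : C(↥(Icc (0:ℝ) 1), ℝ) := ⟨fun x => v ↑x, hv1.continuousOn.restrict⟩ with hVcdef
  set Fv := FF f φ R Vc with hFvdef
  have hFvc : Continuous Fv := hFFc Vc
  have hVe : ∀ t ∈ Icc (0:ℝ) 1, Uext Vc t = v t := by
    intro t ht
    show v (pr t) = v t
    rw [pr_eq ht]
  have hFveq : ∀ t ∈ Icc (0:ℝ) 1, Fv t = f t (v t) (v (φ t)) := by
    intro t ht
    have hφt := hφm ht
    show f (pr t) (cl R (Uext Vc t)) (cl R (Uext Vc (φ (pr t)))) = _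
    rw [pr_eq ht, hVe t ht, hVe (φ t) hφt, cl_eq (hv6 t ht), cl_eq (hv6 (φ t) hφt)]
  set P : ℝ → ℝ := fun t => gq b1 b2 b3 t + HH Fv t with hPdef
  set Q1 : ℝ → ℝ := fun t => b2 + (b3 - b2) * t + HH1 Fv t with hQ1def
  set Q2 : ℝ → ℝ := fun t => (b3 - b2) + HH2 Fv t with hQ2def
  have hp1 : ∀ t, HasDerivAt P (Q1 t) t := fun t =>
    (hasDerivAt_gq b1 b2 b3 t).add (hasDerivAt_HH hFvc t)
  have hp2 : ∀ t, HasDerivAt Q1 (Q2 t) t := by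
    intro t
    have h := ((hasDerivAt_const t b2).add ((hasDerivAt_id t).const_mul (b3 - b2))).add
      (hasDerivAt_HH1 hFvc t)
    refine h.congr_deriv ?_
    ring
  have hp3 : ∀ t, HasDerivAt Q2 (Fv t) t := by
    intro t
    have h := (hasDerivAt_const t (b3 - b2)).add (hasDerivAt_HH2 hFvc t)
    refine h.congr_deriv ?_
    ring
  have hudiff : UniqueDiffOn ℝ (Icc (0:ℝ) 1) := uniqueDiffOn_Icc_zero_one
  set Dv := derivWithin v (Icc 0 1) with hDvdef
  set D2v := derivWithin Dv (Icc 0 1) with hD2vdef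
  have hDvcd : ContDiffOn ℝ 2 Dv (Icc 0 1) :=
    hv1.derivWithin hudiff (by norm_num)
  have hD2vcd : ContDiffOn ℝ 1 D2v (Icc 0 1) :=
    hDvcd.derivWithin hudiff (by norm_num)
  -- step A : second derivatives differ by a constant
  have hQ2d : Differentiable ℝ Q2 := fun t => (hp3 t).differentiableAt
  set z : ℝ → ℝ := fun t => D2v t - Q2 t with hzdef
  have hzdiff : DifferentiableOn ℝ z (Icc 0 1) :=
    (hD2vcd.differentiableOn one_ne_zero).sub hQ2d.differentiableOn
  have hzder : ∀ x ∈ Ico (0:ℝ) 1, derivWithin z (Icc 0 1) x = 0 := by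
    intro x hx
    have hx' : x ∈ Icc (0:ℝ) 1 := Ico_subset_Icc_self hx
    rw [derivWithin_fun_sub (hD2vcd.differentiableOn one_ne_zero x hx')
      (hQ2d.differentiableOn x hx')]
    rw [derivWithin_eq_of_hasDerivAt hp3 hx']
    rw [show derivWithin D2v (Icc 0 1) x = f x (v x) (v (φ x)) from hv2 x hx']
    rw [hFveq x hx']
    ring
  have hzc := constant_of_derivWithin_zero hzdiff hzder
  -- step B : first derivatives
  set c := z 0 with hcdef
  set Q1c : ℝ → ℝ := fun t => Q1 t + c * t with hQ1cdef
  have hq1c : ∀ t, HasDerivAt Q1c (Q2 t + c) t := by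
    intro t
    have h := (hp2 t).add ((hasDerivAt_id t).const_mul c)
    refine h.congr_deriv ?_
    ring
  have hQ1cd : Differentiable ℝ Q1c := fun t => (hq1c t).differentiableAt
  set y : ℝ → ℝ := fun t => Dv t - Q1c t with hydef
  have hydiff : DifferentiableOn ℝ y (Icc 0 1) :=
    (hDvcd.differentiableOn (by norm_num)).sub hQ1cd.differentiableOn
  have hyder : ∀ x ∈ Ico (0:ℝ) 1, derivWithin y (Icc 0 1) x = 0 := by
    intro x hx
    have hx' : x ∈ Icc (0:ℝ) 1 := Ico_subset_Icc_self hx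
    rw [derivWithin_fun_sub (hDvcd.differentiableOn (by norm_num) x hx')
      (hQ1cd.differentiableOn x hx')]
    rw [derivWithin_eq_of_hasDerivAt hq1c hx']
    rw [show derivWithin Dv (Icc 0 1) x = D2v x from rfl]
    have := hzc x hx'
    simp only [hzdef] at this
    linarith [this]
  have hyc := constant_of_derivWithin_zero hydiff hyder
  have hy0 : y 0 = 0 := by
    show Dv 0 - (Q1 0 + c * 0) = 0
    rw [hv4]
    show b2 - (b2 + (b3 - b2) * 0 + HH1 Fv 0 + c * 0) = 0
    rw [HH1_zero]; ring
  have hDvQ : ∀ t ∈ Icc (0:ℝ) 1, Dv t = Q1 t + c * t := by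
    intro t ht
    have := hyc t ht
    rw [hy0] at this
    simp only [hydef, hQ1cdef] at this
    linarith
  have hc0 : c = 0 := by
    have h1 := hDvQ 1 (by norm_num)
    rw [hv5] at h1
    have h2 : Q1 1 = b3 := by
      show b2 + (b3 - b2) * 1 + HH1 Fv 1 = b3
      rw [HH1_one]; ring
    rw [h2] at h1; linarith
  -- step C : v = P on Icc
  have hPd : Differentiable ℝ P := fun t => (hp1 t).differentiableAt
  set w : ℝ → ℝ := fun t => v t - P t with hwdef
  have hwdiff : DifferentiableOn ℝ w (Icc 0 1) :=
    (hv1.differentiableOn (by norm_num)).sub hPd.differentiableOn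
  have hwder : ∀ x ∈ Ico (0:ℝ) 1, derivWithin w (Icc 0 1) x = 0 := by
    intro x hx
    have hx' : x ∈ Icc (0:ℝ) 1 := Ico_subset_Icc_self hx
    rw [derivWithin_fun_sub (hv1.differentiableOn (by norm_num) x hx')
      (hPd.differentiableOn x hx')]
    rw [derivWithin_eq_of_hasDerivAt hp1 hx']
    have := hDvQ x hx'
    simp only [hDvdef] at this
    rw [this, hc0]
    ring
  have hwc := constant_of_derivWithin_zero hwdiff hwder
  have hw0 : w 0 = 0 := by
    simp only [hwdef, hPdef]
    rw [hv3, HH_zero]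
    simp [gq]
  have hvP : ∀ t ∈ Icc (0:ℝ) 1, v t = P t := by
    intro t ht
    have := hwc t ht
    rw [hw0] at this
    simp only [hwdef] at this
    linarith
  have hTV : T Vc = Vc := by
    apply ContinuousMap.ext
    intro x
    rw [hTapp]
    show gq b1 b2 b3 ↑x + HH Fv ↑x = v ↑x
    exact (hvP ↑x x.2).symm
  have hVuf : Vc = uf := hcontr.fixedPoint_unique hTV
  intro t ht
  calc v t = Vc ⟨t, ht⟩ := rfl
    _ = uf ⟨t, ht⟩ := by rw [hVuf]
    _ = u t := (huuf ⟨t, ht⟩).symm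
end

section
/- Assume |f(t,u,v)| ≤ M on D_M, the Lipschitz conditions |f(t,u2,v2) − f(t,u1,v1)| ≤ L1|u2 − u1| + L2|v2 − v1| on D_M, and q := (L1 + L2) M0 < 1. Define the iteration ψ_0(t) = f(t,0,0), u_k(t) = g(t) + ∫₀ᵃ G(t,s) ψ_k(s) ds, and ψ_{k+1}(t) = f(t, u_k(t), u_k(φ(t))) for k = 0, 1, 2, …. Let u be the unique continuous function with |u(t)| ≤ ‖g‖ + M0 M satisfying u(t) = g(t) + ∫₀ᵃ G(t,s) f(s, u(s), u(φ(s))) ds for all t. Then for every k ≥ 0, ‖u_k − u‖ ≤ M0 p_k d, where p_k = q^k/(1 − q) and d = ‖ψ_1 − ψ_0‖. -/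
open Set MeasureTheory

/-- `u_ψ(t) = g(t) + ∫₀ᵃ G(t,s) ψ(s) ds`. -/
noncomputable def uOf (a : ℝ) (G : ℝ → ℝ → ℝ) (g : ℝ → ℝ) (ψ : ℝ → ℝ) (t : ℝ) : ℝ :=
  g t + ∫ s in (0:ℝ)..a, G t s * ψ s

/-- The iteration `ψ₀(t) = f(t,0,0)`, `ψ_{k+1}(t) = f(t, u_k(t), u_k(φ(t)))`, where
`u_k(t) = g(t) + ∫₀ᵃ G(t,s) ψ_k(s) ds`. -/
noncomputable def psiIter (a : ℝ) (G : ℝ → ℝ → ℝ) (g : ℝ → ℝ) (f : ℝ → ℝ → ℝ → ℝ)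
    (φ : ℝ → ℝ) : ℕ → ℝ → ℝ
  | 0 => fun t => f t 0 0
  | k + 1 => fun t =>
      f t (uOf a G g (psiIter a G g f φ k) t) (uOf a G g (psiIter a G g f φ k) (φ t))

/-- Under the assumptions of the existence theorem, the iterative method converges with
`‖u_k − u‖ ≤ M0 p_k d`, where `p_k = q^k/(1−q)`, `q = (L1+L2) M0`, `d = ‖ψ₁ − ψ₀‖`, and `u` is
the exact solution of the integral equation. -/
theorem iterative_method_convergence
    (a : ℝ) (ha : 0 < a)
    (φ : ℝ → ℝ) (hφc : ContinuousOn φ (Icc 0 a)) (hφm : MapsTo φ (Icc 0 a) (Icc 0 a))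
    (G : ℝ → ℝ → ℝ)
    (hG : ContinuousOn (fun p : ℝ × ℝ => G p.1 p.2) (Icc 0 a ×ˢ Icc 0 a))
    (g : ℝ → ℝ) (hg : ContinuousOn g (Icc 0 a))
    (M0 : ℝ) (hM0 : IsGreatest ((fun t => ∫ s in (0:ℝ)..a, |G t s|) '' Icc 0 a) M0)
    (ng : ℝ) (hng : IsGreatest ((fun t => |g t|) '' Icc 0 a) ng)
    (f : ℝ → ℝ → ℝ → ℝ)
    (hfc : ContinuousOn (fun p : ℝ × ℝ × ℝ => f p.1 p.2.1 p.2.2)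
      (Icc 0 a ×ˢ (univ : Set ℝ) ×ˢ (univ : Set ℝ)))
    (M : ℝ) (hM : 0 < M)
    (hbound : ∀ t ∈ Icc (0:ℝ) a, ∀ u v : ℝ,
      |u| ≤ ng + M0 * M → |v| ≤ ng + M0 * M → |f t u v| ≤ M)
    (L1 L2 : ℝ) (hL1 : 0 ≤ L1) (hL2 : 0 ≤ L2)
    (hLip : ∀ t ∈ Icc (0:ℝ) a, ∀ u1 u2 v1 v2 : ℝ,
      |u1| ≤ ng + M0 * M → |u2| ≤ ng + M0 * M →
      |v1| ≤ ng + M0 * M → |v2| ≤ ng + M0 * M →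
      |f t u2 v2 - f t u1 v1| ≤ L1 * |u2 - u1| + L2 * |v2 - v1|)
    (hq : (L1 + L2) * M0 < 1)
    (u : ℝ → ℝ) (huc : ContinuousOn u (Icc 0 a))
    (hub : ∀ t ∈ Icc (0:ℝ) a, |u t| ≤ ng + M0 * M)
    (hueq : ∀ t ∈ Icc (0:ℝ) a,
      u t = g t + ∫ s in (0:ℝ)..a, G t s * f s (u s) (u (φ s)))
    (d : ℝ)
    (hd : IsGreatest
      ((fun t => |psiIter a G g f φ 1 t - psiIter a G g f φ 0 t|) '' Icc 0 a) d) :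
    ∀ k : ℕ, ∀ t ∈ Icc (0:ℝ) a,
      |uOf a G g (psiIter a G g f φ k) t - u t|
        ≤ M0 * (((L1 + L2) * M0) ^ k / (1 - (L1 + L2) * M0)) * d := by
  have haa : (0:ℝ) ≤ a := ha.le
  have huIcc : uIcc (0:ℝ) a = Icc 0 a := uIcc_of_le haa
  have hIoc_sub : uIoc (0:ℝ) a ⊆ Icc 0 a := by
    rw [uIoc_of_le haa]; exact Ioc_subset_Icc_self
  have h0mem : (0:ℝ) ∈ Icc (0:ℝ) a := ⟨le_refl _, haa⟩
  -- slices of G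
  have hGslice : ∀ t ∈ Icc (0:ℝ) a, ContinuousOn (fun s => G t s) (Icc 0 a) := by
    intro t ht
    exact hG.comp (continuousOn_const.prodMk continuousOn_id)
      (fun s hs => mk_mem_prod ht hs)
  -- nonnegativity facts
  have hM0_nonneg : 0 ≤ M0 := by
    obtain ⟨t, ht, hEq⟩ := hM0.1
    rw [← hEq]
    exact intervalIntegral.integral_nonneg haa (fun s _ => abs_nonneg _)
  have hng_nonneg : 0 ≤ ng := by
    obtain ⟨t, _, hEq⟩ := hng.1
    rw [← hEq]; exact abs_nonneg _
  have hd0 : 0 ≤ d := by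
    obtain ⟨t, _, hEq⟩ := hd.1
    rw [← hEq]; exact abs_nonneg _
  set q : ℝ := (L1 + L2) * M0 with hqdef
  have hq0 : 0 ≤ q := mul_nonneg (by linarith) hM0_nonneg
  have h1q : 0 < 1 - q := by linarith
  set B : ℝ := ng + M0 * M with hBdef
  have hB0 : 0 ≤ B := by positivity
  -- integrability
  have hInt : ∀ t ∈ Icc (0:ℝ) a, ∀ h : ℝ → ℝ, ContinuousOn h (Icc 0 a) →
      IntervalIntegrable (fun s => G t s * h s) volume 0 a := by
    intro t ht h hc
    apply ContinuousOn.intervalIntegrable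
    rw [huIcc]
    exact (hGslice t ht).mul hc
  -- key integral bound
  have hKey : ∀ h : ℝ → ℝ, ContinuousOn h (Icc 0 a) → ∀ C : ℝ, 0 ≤ C →
      (∀ s ∈ Icc (0:ℝ) a, |h s| ≤ C) →
      ∀ t ∈ Icc (0:ℝ) a, |∫ s in (0:ℝ)..a, G t s * h s| ≤ M0 * C := by
    intro h hc C hC0 hCb t ht
    have hint1 : IntervalIntegrable (fun s => G t s * h s) volume 0 a := hInt t ht h hc
    have hint2 : IntervalIntegrable (fun s => |G t s * h s|) volume 0 a := hint1.abs
    have hint3 : IntervalIntegrable (fun s => |G t s| * C) volume 0 a := by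
      apply ContinuousOn.intervalIntegrable
      rw [huIcc]
      exact ((hGslice t ht).abs).mul continuousOn_const
    calc |∫ s in (0:ℝ)..a, G t s * h s|
        ≤ ∫ s in (0:ℝ)..a, |G t s * h s| :=
          intervalIntegral.abs_integral_le_integral_abs haa
      _ ≤ ∫ s in (0:ℝ)..a, |G t s| * C := by
          apply intervalIntegral.integral_mono_on haa hint2 hint3
          intro s hs
          rw [abs_mul]
          exact mul_le_mul_of_nonneg_left (hCb s hs) (abs_nonneg _)
      _ = (∫ s in (0:ℝ)..a, |G t s|) * C := intervalIntegral.integral_mul_const _ _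
      _ ≤ M0 * C := mul_le_mul_of_nonneg_right (hM0.2 ⟨t, ht, rfl⟩) hC0
  -- continuity of uOf
  have hUcont : ∀ h : ℝ → ℝ, ContinuousOn h (Icc 0 a) →
      ContinuousOn (uOf a G g h) (Icc 0 a) := by
    intro h hc
    apply hg.add
    obtain ⟨CG, hCG⟩ := (isCompact_Icc.prod isCompact_Icc).exists_bound_of_continuousOn hG
    obtain ⟨Ch, hCh⟩ := isCompact_Icc.exists_bound_of_continuousOn hc
    intro x₀ hx₀
    apply intervalIntegral.continuousWithinAt_of_dominated_interval
      (bound := fun _ => CG * Ch)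
    · filter_upwards [self_mem_nhdsWithin] with x hx
      exact (((hGslice x hx).mul hc).aestronglyMeasurable measurableSet_Icc).mono_measure
        (Measure.restrict_mono hIoc_sub le_rfl)
    · filter_upwards [self_mem_nhdsWithin] with x hx
      apply ae_of_all
      intro s hs
      have hs' : s ∈ Icc (0:ℝ) a := hIoc_sub hs
      have h1 : ‖G x s‖ ≤ CG := hCG (x, s) (mk_mem_prod hx hs')
      have h2 : ‖h s‖ ≤ Ch := hCh s hs'
      calc ‖G x s * h s‖ = ‖G x s‖ * ‖h s‖ := norm_mul _ _
        _ ≤ CG * Ch := mul_le_mul h1 h2 (norm_nonneg _) ((norm_nonneg (G x s)).trans h1)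
    · exact intervalIntegrable_const
    · apply ae_of_all
      intro s hs
      have hs' : s ∈ Icc (0:ℝ) a := hIoc_sub hs
      have hGc : ContinuousWithinAt (fun x => G x s) (Icc 0 a) x₀ := by
        have := (hG (x₀, s) (mk_mem_prod hx₀ hs')).comp
          (f := fun x : ℝ => (x, s)) (continuousWithinAt_id.prodMk continuousWithinAt_const)
          (fun x hx => mk_mem_prod hx hs')
        exact this
      exact hGc.mul continuousWithinAt_const
  -- bound of uOf
  have hUbound : ∀ h : ℝ → ℝ, ContinuousOn h (Icc 0 a) →
      (∀ s ∈ Icc (0:ℝ) a, |h s| ≤ M) → ∀ t ∈ Icc (0:ℝ) a, |uOf a G g h t| ≤ B := by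
    intro h hc hb t ht
    have h1 : |g t| ≤ ng := hng.2 ⟨t, ht, rfl⟩
    have h2 : |∫ s in (0:ℝ)..a, G t s * h s| ≤ M0 * M := hKey h hc M hM.le hb t ht
    calc |uOf a G g h t| ≤ |g t| + |∫ s in (0:ℝ)..a, G t s * h s| := abs_add_le _ _
      _ ≤ ng + M0 * M := add_le_add h1 h2
  -- properties of the iterates
  have hpsi : ∀ k : ℕ, ContinuousOn (psiIter a G g f φ k) (Icc 0 a) ∧
      ∀ t ∈ Icc (0:ℝ) a, |psiIter a G g f φ k t| ≤ M := by
    intro k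
    induction k with
    | zero =>
      constructor
      · show ContinuousOn (fun t => f t 0 0) (Icc 0 a)
        exact hfc.comp
          (continuousOn_id.prodMk (continuousOn_const.prodMk continuousOn_const))
          (fun t ht => mk_mem_prod ht (mk_mem_prod (mem_univ _) (mem_univ _)))
      · intro t ht
        have h0 : |(0:ℝ)| ≤ B := by rw [abs_zero]; exact hB0
        exact hbound t ht 0 0 h0 h0
    | succ k ih =>
      have huk : ContinuousOn (uOf a G g (psiIter a G g f φ k)) (Icc 0 a) :=
        hUcont _ ih.1
      have hukb : ∀ t ∈ Icc (0:ℝ) a, |uOf a G g (psiIter a G g f φ k) t| ≤ B :=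
        hUbound _ ih.1 ih.2
      constructor
      · show ContinuousOn (fun t => f t (uOf a G g (psiIter a G g f φ k) t)
          (uOf a G g (psiIter a G g f φ k) (φ t))) (Icc 0 a)
        exact hfc.comp
          (continuousOn_id.prodMk (huk.prodMk (huk.comp hφc hφm)))
          (fun t ht => mk_mem_prod ht (mk_mem_prod (mem_univ _) (mem_univ _)))
      · intro t ht
        exact hbound t ht _ _ (hukb t ht) (hukb (φ t) (hφm ht))
  -- the exact kernel ψ*
  set ψs : ℝ → ℝ := fun t => f t (u t) (u (φ t)) with hψsdef
  have hψsc : ContinuousOn ψs (Icc 0 a) :=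
    hfc.comp (continuousOn_id.prodMk (huc.prodMk (huc.comp hφc hφm)))
      (fun t ht => mk_mem_prod ht (mk_mem_prod (mem_univ _) (mem_univ _)))
  have hψsb : ∀ t ∈ Icc (0:ℝ) a, |ψs t| ≤ M := fun t ht =>
    hbound t ht _ _ (hub t ht) (hub (φ t) (hφm ht))
  have hueq' : ∀ t ∈ Icc (0:ℝ) a, u t = uOf a G g ψs t := by
    intro t ht
    exact hueq t ht
  -- difference formula
  have hdiff : ∀ h : ℝ → ℝ, ContinuousOn h (Icc 0 a) → ∀ t ∈ Icc (0:ℝ) a,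
      uOf a G g h t - u t = ∫ s in (0:ℝ)..a, G t s * (h s - ψs s) := by
    intro h hc t ht
    rw [hueq' t ht]
    show (g t + ∫ s in (0:ℝ)..a, G t s * h s) - (g t + ∫ s in (0:ℝ)..a, G t s * ψs s)
      = ∫ s in (0:ℝ)..a, G t s * (h s - ψs s)
    have hsub : (∫ s in (0:ℝ)..a, G t s * (h s - ψs s))
        = (∫ s in (0:ℝ)..a, G t s * h s) - ∫ s in (0:ℝ)..a, G t s * ψs s := by
      rw [← intervalIntegral.integral_sub (hInt t ht h hc) (hInt t ht ψs hψsc)]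
      apply intervalIntegral.integral_congr
      intro s _
      ring
    rw [hsub]
    ring
  -- contraction step
  have hstep : ∀ C : ℝ, 0 ≤ C → ∀ k : ℕ,
      (∀ s ∈ Icc (0:ℝ) a, |psiIter a G g f φ k s - ψs s| ≤ C) →
      ∀ t ∈ Icc (0:ℝ) a, |psiIter a G g f φ (k + 1) t - ψs t| ≤ q * C := by
    intro C hC0 k hCb t ht
    have hkc := (hpsi k).1
    have hkb := (hpsi k).2
    have hdc : ContinuousOn (fun s => psiIter a G g f φ k s - ψs s) (Icc 0 a) :=
      hkc.sub hψsc
    have hud : ∀ x ∈ Icc (0:ℝ) a,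
        |uOf a G g (psiIter a G g f φ k) x - u x| ≤ M0 * C := by
      intro x hx
      rw [hdiff _ hkc x hx]
      exact hKey _ hdc C hC0 hCb x hx
    have hukb : ∀ x ∈ Icc (0:ℝ) a, |uOf a G g (psiIter a G g f φ k) x| ≤ B :=
      hUbound _ hkc hkb
    have hφt : φ t ∈ Icc (0:ℝ) a := hφm ht
    have hlip := hLip t ht (u t) (uOf a G g (psiIter a G g f φ k) t)
      (u (φ t)) (uOf a G g (psiIter a G g f φ k) (φ t))
      (hub t ht) (hukb t ht) (hub (φ t) hφt) (hukb (φ t) hφt)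
    have h1 := hud t ht
    have h2 := hud (φ t) hφt
    have : |psiIter a G g f φ (k + 1) t - ψs t|
        ≤ L1 * |uOf a G g (psiIter a G g f φ k) t - u t|
          + L2 * |uOf a G g (psiIter a G g f φ k) (φ t) - u (φ t)| := hlip
    calc |psiIter a G g f φ (k + 1) t - ψs t|
        ≤ L1 * |uOf a G g (psiIter a G g f φ k) t - u t|
          + L2 * |uOf a G g (psiIter a G g f φ k) (φ t) - u (φ t)| := this
      _ ≤ L1 * (M0 * C) + L2 * (M0 * C) := add_le_add
          (mul_le_mul_of_nonneg_left h1 hL1) (mul_le_mul_of_nonneg_left h2 hL2)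
      _ = q * C := by rw [hqdef]; ring
  -- maximum of |ψ₀ − ψ*|
  have hF0c : ContinuousOn (fun t => |psiIter a G g f φ 0 t - ψs t|) (Icc 0 a) :=
    ((hpsi 0).1.sub hψsc).abs
  obtain ⟨ts, hts, htsmax⟩ :=
    isCompact_Icc.exists_isMaxOn (⟨0, h0mem⟩ : (Icc (0:ℝ) a).Nonempty) hF0c
  set e0 : ℝ := |psiIter a G g f φ 0 ts - ψs ts| with he0def
  have he0_nonneg : 0 ≤ e0 := abs_nonneg _
  have he0_ub : ∀ s ∈ Icc (0:ℝ) a, |psiIter a G g f φ 0 s - ψs s| ≤ e0 :=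
    fun s hs => htsmax hs
  -- e0 ≤ d / (1 - q)
  have he0_le : e0 ≤ d / (1 - q) := by
    have h1 : |psiIter a G g f φ 1 ts - ψs ts| ≤ q * e0 :=
      hstep e0 he0_nonneg 0 he0_ub ts hts
    have h2 : |psiIter a G g f φ 0 ts - psiIter a G g f φ 1 ts| ≤ d := by
      rw [abs_sub_comm]
      exact hd.2 ⟨ts, hts, rfl⟩
    have h3 : e0 ≤ d + q * e0 := by
      calc e0 = |psiIter a G g f φ 0 ts - ψs ts| := rfl
        _ ≤ |psiIter a G g f φ 0 ts - psiIter a G g f φ 1 ts|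
            + |psiIter a G g f φ 1 ts - ψs ts| := abs_sub_le _ _ _
        _ ≤ d + q * e0 := add_le_add h2 h1
    rw [le_div_iff₀ h1q]
    nlinarith
  -- geometric decay
  have hek : ∀ k : ℕ, ∀ s ∈ Icc (0:ℝ) a,
      |psiIter a G g f φ k s - ψs s| ≤ q ^ k * e0 := by
    intro k
    induction k with
    | zero => simpa using he0_ub
    | succ k ih =>
      intro s hs
      have := hstep (q ^ k * e0) (mul_nonneg (pow_nonneg hq0 k) he0_nonneg) k ih s hs
      calc |psiIter a G g f φ (k + 1) s - ψs s| ≤ q * (q ^ k * e0) := this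
        _ = q ^ (k + 1) * e0 := by ring
  -- conclusion
  intro k t ht
  have hkc := (hpsi k).1
  have hdc : ContinuousOn (fun s => psiIter a G g f φ k s - ψs s) (Icc 0 a) :=
    hkc.sub hψsc
  have h1 : |uOf a G g (psiIter a G g f φ k) t - u t| ≤ M0 * (q ^ k * e0) := by
    rw [hdiff _ hkc t ht]
    exact hKey _ hdc (q ^ k * e0) (mul_nonneg (pow_nonneg hq0 k) he0_nonneg)
      (hek k) t ht
  have h2 : M0 * (q ^ k * e0) ≤ M0 * (q ^ k * (d / (1 - q))) :=
    mul_le_mul_of_nonneg_left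
      (mul_le_mul_of_nonneg_left he0_le (pow_nonneg hq0 k)) hM0_nonneg
  calc |uOf a G g (psiIter a G g f φ k) t - u t|
      ≤ M0 * (q ^ k * e0) := h1
    _ ≤ M0 * (q ^ k * (d / (1 - q))) := h2
    _ = M0 * (q ^ k / (1 - q)) * d := by ring
end

section
/- Let ψ: [0,1] → ℝ be twice continuously differentiable. Then there exists a constant C > 0 such that for every integer N ≥ 1, with h = 1/N, grid points s_j = j h, and trapezoidal weights ρ_0 = ρ_N = 1/2 and ρ_j = 1 for 1 ≤ j ≤ N − 1, one has for every ξ ∈ [0,1]: |∫₀¹ G(ξ, s) ψ(s) ds − Σ_{j=0}^{N} h ρ_j G(ξ, s_j) ψ(s_j)| ≤ C h². -/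
open Set MeasureTheory

/-- Trapezoidal weights: `ρ_0 = ρ_N = 1/2` and `ρ_j = 1` for `1 ≤ j ≤ N − 1`. -/
noncomputable def trapWeight (N j : ℕ) : ℝ := if j = 0 ∨ j = N then 1 / 2 else 1

lemma G01_eq (ξ s : ℝ) : G01 ξ s = ξ ^ 2 / 2 * (s - 1) + (min (s - ξ) 0) ^ 2 / 2 := by
  unfold G01
  split_ifs with h
  · rw [min_eq_left (by linarith)]; ring
  · rw [min_eq_right (by linarith)]; ring

lemma min0_lip (a b : ℝ) : |min a 0 - min b 0| ≤ |a - b| := by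
  rcases le_total a 0 with h | h <;> rcases le_total b 0 with h' | h'
  · simp [min_eq_left h, min_eq_left h']
  · rw [min_eq_left h, min_eq_right h', sub_zero, abs_of_nonpos h,
      abs_of_nonpos (by linarith : a - b ≤ 0)]; linarith
  · rw [min_eq_right h, min_eq_left h', zero_sub, abs_neg, abs_of_nonpos h',
      abs_of_nonneg (by linarith : 0 ≤ a - b)]; linarith
  · simp [min_eq_right h, min_eq_right h', abs_nonneg]

lemma Gs_bd {ξ s : ℝ} (hξ : ξ ∈ Icc (0:ℝ) 1) (hs : s ∈ Icc (0:ℝ) 1) :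
    |ξ ^ 2 / 2 + min (s - ξ) 0| ≤ 2 := by
  have h1 : -1 ≤ min (s - ξ) 0 := le_min (by linarith [hξ.2, hs.1]) (by norm_num)
  have h2 : min (s - ξ) 0 ≤ 0 := min_le_right _ _
  have h3 : ξ ^ 2 ≤ 1 := by nlinarith [hξ.1, hξ.2]
  rw [abs_le]
  constructor <;> nlinarith [sq_nonneg ξ]

lemma G01_bd {ξ s : ℝ} (hξ : ξ ∈ Icc (0:ℝ) 1) (hs : s ∈ Icc (0:ℝ) 1) :
    |G01 ξ s| ≤ 2 := by
  rw [G01_eq]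
  have h1 : -1 ≤ min (s - ξ) 0 := le_min (by linarith [hξ.2, hs.1]) (by norm_num)
  have h2 : min (s - ξ) 0 ≤ 0 := min_le_right _ _
  have h3 : ξ ^ 2 ≤ 1 := by nlinarith [hξ.1, hξ.2]
  have h4 : (min (s - ξ) 0) ^ 2 ≤ 1 := by nlinarith
  have h5 : ξ ^ 2 * (1 - s) ≤ 1 := by nlinarith [sq_nonneg ξ, hs.1, hs.2]
  have h6 : 0 ≤ ξ ^ 2 * (1 - s) := mul_nonneg (sq_nonneg ξ) (by linarith [hs.2])
  rw [abs_le]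
  constructor <;> nlinarith [sq_nonneg (min (s - ξ) 0)]

lemma G01_lip {ξ x y : ℝ} (hξ : ξ ∈ Icc (0:ℝ) 1) (hx : x ∈ Icc (0:ℝ) 1)
    (hy : y ∈ Icc (0:ℝ) 1) :
    |G01 ξ x - G01 ξ y| ≤ 2 * |x - y| := by
  rw [G01_eq, G01_eq]
  set mx := min (x - ξ) 0 with hmx
  set my := min (y - ξ) 0 with hmy
  have hd : |mx - my| ≤ |x - y| := by
    have := min0_lip (x - ξ) (y - ξ)
    rw [show x - ξ - (y - ξ) = x - y by ring] at this
    exact this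
  have hmx2 : mx ≤ 0 := min_le_right _ _
  have hmy2 : my ≤ 0 := min_le_right _ _
  have h3 : ξ ^ 2 ≤ 1 := by nlinarith [hξ.1, hξ.2]
  have key : ξ ^ 2 / 2 * (x - 1) + mx ^ 2 / 2 - (ξ ^ 2 / 2 * (y - 1) + my ^ 2 / 2)
      = ξ ^ 2 / 2 * (x - y) + (mx - my) * ((mx + my) / 2) := by ring
  rw [key]
  have t1 : |ξ ^ 2 / 2 * (x - y)| ≤ 1 / 2 * |x - y| := by
    rw [abs_mul, abs_of_nonneg (by positivity : (0:ℝ) ≤ ξ ^ 2 / 2)]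
    apply mul_le_mul_of_nonneg_right (by linarith) (abs_nonneg _)
  have t2 : |(mx - my) * ((mx + my) / 2)| ≤ |x - y| * 1 := by
    rw [abs_mul]
    have hmx1 : -1 ≤ mx := le_min (by linarith [hξ.2, hx.1]) (by norm_num)
    have hmy1 : -1 ≤ my := le_min (by linarith [hξ.2, hy.1]) (by norm_num)
    have hb : |(mx + my) / 2| ≤ 1 := by
      rw [abs_le]
      constructor <;> linarith
    exact mul_le_mul hd hb (abs_nonneg _) (abs_nonneg _)
  calc |ξ ^ 2 / 2 * (x - y) + (mx - my) * ((mx + my) / 2)|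
      ≤ |ξ ^ 2 / 2 * (x - y)| + |(mx - my) * ((mx + my) / 2)| := abs_add_le _ _
    _ ≤ 2 * |x - y| := by rw [mul_one] at t2; linarith [abs_nonneg (x - y)]



lemma hasDerivAt_minsq (x : ℝ) :
    HasDerivAt (fun y : ℝ => (min y 0) ^ 2) (2 * min x 0) x := by
  rcases lt_trichotomy x 0 with hx | rfl | hx
  · have hev : (fun y : ℝ => (min y 0) ^ 2) =ᶠ[nhds x] fun y => y ^ 2 := by
      filter_upwards [Iio_mem_nhds hx] with y hy
      simp [min_eq_left (le_of_lt (mem_Iio.mp hy))]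
    have h2 : HasDerivAt (fun y : ℝ => y ^ 2) (2 * x) x := by
      simpa using hasDerivAt_pow 2 x
    rw [min_eq_left hx.le]
    exact h2.congr_of_eventuallyEq hev
  · rw [hasDerivAt_iff_isLittleO]
    simp only [min_self, sub_zero, smul_eq_mul, mul_zero]
    rw [Asymptotics.isLittleO_iff]
    intro c hc
    have : ∀ᶠ y : ℝ in nhds 0, |y| < c := by
      have := eventually_abs_sub_lt (0:ℝ) hc
      simpa using this
    filter_upwards [this] with y hy
    have h1 : |min y 0| ≤ |y| := by
      rcases le_total y 0 with h | h
      · simp [min_eq_left h]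
      · simp [min_eq_right h, abs_nonneg]
    calc ‖(min y 0) ^ 2 - 0 ^ 2‖ = |min y 0| * |min y 0| := by
          rw [Real.norm_eq_abs]; simp [sq_abs ,abs_mul, sq]
      _ ≤ c * |y| := by
          apply mul_le_mul (le_of_lt (lt_of_le_of_lt h1 hy)) h1 (abs_nonneg _) hc.le
      _ = c * ‖y‖ := by rw [Real.norm_eq_abs]
  · have hev : (fun y : ℝ => (min y 0) ^ 2) =ᶠ[nhds x] fun _ => (0:ℝ) := by
      filter_upwards [Ioi_mem_nhds hx] with y hy
      simp [min_eq_right (le_of_lt (mem_Ioi.mp hy))]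
    rw [min_eq_right hx.le, mul_zero]
    exact (hasDerivAt_const x 0).congr_of_eventuallyEq hev


lemma hasDerivAt_G01 (ξ s : ℝ) :
    HasDerivAt (fun s => G01 ξ s) (ξ ^ 2 / 2 + min (s - ξ) 0) s := by
  have h1 : HasDerivAt (fun y : ℝ => (min (y - ξ) 0) ^ 2) (2 * min (s - ξ) 0) s := by
    have := (hasDerivAt_minsq (s - ξ)).comp s ((hasDerivAt_id s).sub_const ξ)
    simpa [Function.comp_def] using this
  have h2 : HasDerivAt (fun y : ℝ => ξ ^ 2 / 2 * (y - 1) + (min (y - ξ) 0) ^ 2 / 2)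
      (ξ ^ 2 / 2 * 1 + (2 * min (s - ξ) 0) / 2) s :=
    (((hasDerivAt_id s).sub_const 1).const_mul (ξ ^ 2 / 2)).add (h1.div_const 2)
  have hfun : (fun s => G01 ξ s) = fun y => ξ ^ 2 / 2 * (y - 1) + (min (y - ξ) 0) ^ 2 / 2 :=
    funext (G01_eq ξ)
  rw [hfun]
  convert h2 using 1
  ring

lemma continuous_G01 (ξ : ℝ) : Continuous (fun s => G01 ξ s) := by
  have hfun : (fun s => G01 ξ s) = fun y => ξ ^ 2 / 2 * (y - 1) + (min (y - ξ) 0) ^ 2 / 2 :=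
    funext (G01_eq ξ)
  rw [hfun]
  fun_prop



open intervalIntegral in
private lemma my_integral_id (a b : ℝ) : ∫ x in a..b, x = (b ^ 2 - a ^ 2) / 2 := integral_id

open intervalIntegral in
private lemma my_integral_const (a b c : ℝ) : ∫ _x in a..b, c = (b - a) * c := by
  rw [intervalIntegral.integral_const, smul_eq_mul]

lemma trap_err (f f' : ℝ → ℝ) (a b M : ℝ) (hab : a < b) (hM : 0 ≤ M)
    (hc : ContinuousOn f (Icc a b)) (hc' : ContinuousOn f' (Icc a b))
    (hd : ∀ x ∈ Ioo a b, HasDerivAt f (f' x) x)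
    (hL : ∀ x ∈ Icc a b, |f' x - f' ((a + b) / 2)| ≤ M * |x - (a + b) / 2|) :
    |(∫ s in a..b, f s) - (b - a) / 2 * (f a + f b)| ≤ M * (b - a) ^ 3 / 4 := by
  set m := (a + b) / 2 with hm
  have huIcc : uIcc a b = Icc a b := uIcc_of_le hab.le
  have hI : IntervalIntegrable f volume a b :=
    (huIcc ▸ hc).intervalIntegrable
  have hcg : ContinuousOn (fun s => (s - m) * f' s) (Icc a b) :=
    ((continuousOn_id.sub continuousOn_const).mul hc')
  have hIg : IntervalIntegrable (fun s => (s - m) * f' s) volume a b :=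
    (huIcc ▸ hcg).intervalIntegrable
  have parts : ∫ s in a..b, (f s + (s - m) * f' s) = (b - m) * f b - (a - m) * f a := by
    have := intervalIntegral.integral_eq_sub_of_hasDerivAt_of_le
      (f := fun s => (s - m) * f s) (f' := fun s => f s + (s - m) * f' s) hab.le
      ((continuousOn_id.sub continuousOn_const).mul hc)
      (fun x hx => by
        have := (((hasDerivAt_id x).sub_const m).mul (hd x hx))
        refine this.congr_deriv ?_
        simp)
      (hI.add hIg)
    simpa using this
  have split : ∫ s in a..b, (f s + (s - m) * f' s)
      = (∫ s in a..b, f s) + ∫ s in a..b, (s - m) * f' s :=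
    intervalIntegral.integral_add hI hIg
  have zero_mean : (∫ s in a..b, (s - m)) = 0 := by
    have h1 : (∫ s in a..b, (s - m)) = (∫ s in a..b, s) - ∫ s in a..b, (m : ℝ) :=
      intervalIntegral.integral_sub intervalIntegral.intervalIntegrable_id
        intervalIntegrable_const
    rw [h1, my_integral_id, my_integral_const, hm]
    ring
  have key : (∫ s in a..b, (s - m) * f' s) = ∫ s in a..b, (s - m) * (f' s - f' m) := by
    have h2 : (∫ s in a..b, (s - m) * (f' s - f' m))
        = (∫ s in a..b, (s - m) * f' s) - ∫ s in a..b, f' m * (s - m) := by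
      rw [← intervalIntegral.integral_sub hIg
        (show IntervalIntegrable (fun s => f' m * (s - m)) volume a b from
          (continuous_const.mul (continuous_id'.sub continuous_const)).intervalIntegrable a b)]
      congr 1; funext s; ring
    have h3 : (∫ s in a..b, f' m * (s - m)) = f' m * ∫ s in a..b, (s - m) :=
      intervalIntegral.integral_const_mul _ _
    rw [h2, h3, zero_mean, mul_zero, sub_zero]
  have bnd : ‖∫ s in a..b, (s - m) * (f' s - f' m)‖ ≤ (M * (b - a) / 2 * ((b - a) / 2)) * |b - a| := by
    apply intervalIntegral.norm_integral_le_of_norm_le_const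
    intro x hx
    have hx' : x ∈ Icc a b := by
      rw [uIoc_of_le hab.le] at hx
      exact Ioc_subset_Icc_self hx
    have h1 : |x - m| ≤ (b - a) / 2 := by
      rw [abs_le, hm]
      constructor <;> [linarith [hx'.1]; linarith [hx'.2]]
    have h2 : |f' x - f' m| ≤ M * |x - m| := hL x hx'
    rw [Real.norm_eq_abs, abs_mul]
    calc |x - m| * |f' x - f' m| ≤ ((b - a) / 2) * (M * ((b - a) / 2)) := by
          apply mul_le_mul h1 (h2.trans (by nlinarith [abs_nonneg (x - m)])) (abs_nonneg _)
          linarith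
      _ = M * (b - a) / 2 * ((b - a) / 2) := by ring
  have hfin : (∫ s in a..b, f s) - (b - a) / 2 * (f a + f b)
      = -(∫ s in a..b, (s - m) * (f' s - f' m)) := by
    rw [← key]
    have hend : (b - m) * f b - (a - m) * f a = (b - a) / 2 * (f a + f b) := by
      rw [hm]; ring
    have := parts
    rw [split, hend] at this
    linarith
  rw [hfin, abs_neg, ← Real.norm_eq_abs]
  calc ‖∫ s in a..b, (s - m) * (f' s - f' m)‖
      ≤ (M * (b - a) / 2 * ((b - a) / 2)) * |b - a| := bnd
    _ = M * (b - a) ^ 3 / 4 := by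
        rw [abs_of_nonneg (by linarith : (0:ℝ) ≤ b - a)]; ring


/-- For twice continuously differentiable `ψ` on `[0,1]`, the composite trapezoidal rule
applied to `s ↦ G(ξ, s) ψ(s)` has error `O(h²)` uniformly in `N` and in `ξ ∈ [0,1]`. -/
theorem trapezoidal_rule_green_kernel_at_any_point
    (ψ : ℝ → ℝ) (hψ : ContDiffOn ℝ 2 ψ (Icc 0 1)) :
    ∃ C > (0:ℝ), ∀ N : ℕ, 1 ≤ N → ∀ ξ ∈ Icc (0:ℝ) 1,
      |(∫ s in (0:ℝ)..1, G01 ξ s * ψ s)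
          - ∑ j ∈ Finset.range (N + 1),
              (1 / (N:ℝ)) * trapWeight N j * G01 ξ ((j : ℝ) / N) * ψ ((j : ℝ) / N)|
        ≤ C * (1 / (N:ℝ)) ^ 2 := by
  have hUD : UniqueDiffOn ℝ (Icc (0:ℝ) 1) := uniqueDiffOn_Icc one_pos
  set φ := derivWithin ψ (Icc (0:ℝ) 1) with hφdef
  have hφC1 : ContDiffOn ℝ 1 φ (Icc 0 1) := hψ.derivWithin hUD (by norm_num)
  have hφc : ContinuousOn φ (Icc 0 1) := hφC1.continuousOn
  have hψc : ContinuousOn ψ (Icc 0 1) := hψ.continuousOn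
  have hφ'c : ContinuousOn (derivWithin φ (Icc 0 1)) (Icc 0 1) :=
    hφC1.continuousOn_derivWithin hUD le_rfl
  obtain ⟨K₀, hK₀⟩ := isCompact_Icc.exists_bound_of_continuousOn hψc
  obtain ⟨K₁, hK₁⟩ := isCompact_Icc.exists_bound_of_continuousOn hφc
  obtain ⟨K₂, hK₂⟩ := isCompact_Icc.exists_bound_of_continuousOn hφ'c
  set K := max (max K₀ K₁) (max K₂ 1) with hKdef
  have hK1 : (1:ℝ) ≤ K := le_max_of_le_right (le_max_right _ _)
  have hK0 : (0:ℝ) ≤ K := by linarith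
  have hψb : ∀ x ∈ Icc (0:ℝ) 1, |ψ x| ≤ K := fun x hx => by
    have := hK₀ x hx; rw [Real.norm_eq_abs] at this
    exact this.trans (le_max_of_le_left (le_max_left _ _))
  have hφb : ∀ x ∈ Icc (0:ℝ) 1, |φ x| ≤ K := fun x hx => by
    have := hK₁ x hx; rw [Real.norm_eq_abs] at this
    exact this.trans (le_max_of_le_left (le_max_right _ _))
  have hφ'b : ∀ x ∈ Icc (0:ℝ) 1, ‖derivWithin φ (Icc 0 1) x‖ ≤ K := fun x hx =>
    (hK₂ x hx).trans (le_max_of_le_right (le_max_left _ _))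
  have hψlip : ∀ x ∈ Icc (0:ℝ) 1, ∀ y ∈ Icc (0:ℝ) 1, |ψ x - ψ y| ≤ K * |x - y| := by
    intro x hx y hy
    have := (convex_Icc (0:ℝ) 1).norm_image_sub_le_of_norm_derivWithin_le
      (hψ.differentiableOn two_ne_zero)
      (fun z hz => by rw [← hφdef, Real.norm_eq_abs]; exact hφb z hz) hy hx
    simpa [Real.norm_eq_abs] using this
  have hφlip : ∀ x ∈ Icc (0:ℝ) 1, ∀ y ∈ Icc (0:ℝ) 1, |φ x - φ y| ≤ K * |x - y| := by
    intro x hx y hy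
    have := (convex_Icc (0:ℝ) 1).norm_image_sub_le_of_norm_derivWithin_le
      (hφC1.differentiableOn one_ne_zero) hφ'b hy hx
    simpa [Real.norm_eq_abs] using this
  set D : ℝ → ℝ → ℝ := fun ξ s => (ξ ^ 2 / 2 + min (s - ξ) 0) * ψ s + G01 ξ s * φ s with hD
  -- uniform Lipschitz estimate for D ξ on [0,1]
  have hlip : ∀ ξ ∈ Icc (0:ℝ) 1, ∀ x ∈ Icc (0:ℝ) 1, ∀ y ∈ Icc (0:ℝ) 1,
      |D ξ x - D ξ y| ≤ 8 * K * |x - y| := by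
    intro ξ hξ x hx y hy
    have hGs_lip : |(ξ ^ 2 / 2 + min (x - ξ) 0) - (ξ ^ 2 / 2 + min (y - ξ) 0)| ≤ |x - y| := by
      have := min0_lip (x - ξ) (y - ξ)
      rw [show x - ξ - (y - ξ) = x - y by ring] at this
      calc |(ξ ^ 2 / 2 + min (x - ξ) 0) - (ξ ^ 2 / 2 + min (y - ξ) 0)|
          = |min (x - ξ) 0 - min (y - ξ) 0| := by ring_nf
        _ ≤ |x - y| := this
    have key : D ξ x - D ξ y
        = ((ξ ^ 2 / 2 + min (x - ξ) 0) - (ξ ^ 2 / 2 + min (y - ξ) 0)) * ψ x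
          + (ξ ^ 2 / 2 + min (y - ξ) 0) * (ψ x - ψ y)
          + (G01 ξ x - G01 ξ y) * φ x
          + G01 ξ y * (φ x - φ y) := by rw [hD]; ring
    rw [key]
    have t1 : |((ξ ^ 2 / 2 + min (x - ξ) 0) - (ξ ^ 2 / 2 + min (y - ξ) 0)) * ψ x| ≤ K * |x - y| := by
      rw [abs_mul]
      calc |(ξ ^ 2 / 2 + min (x - ξ) 0) - (ξ ^ 2 / 2 + min (y - ξ) 0)| * |ψ x|
          ≤ |x - y| * K := mul_le_mul hGs_lip (hψb x hx) (abs_nonneg _) (abs_nonneg _)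
        _ = K * |x - y| := mul_comm _ _
    have t2 : |(ξ ^ 2 / 2 + min (y - ξ) 0) * (ψ x - ψ y)| ≤ 2 * K * |x - y| := by
      rw [abs_mul]
      calc |ξ ^ 2 / 2 + min (y - ξ) 0| * |ψ x - ψ y|
          ≤ 2 * (K * |x - y|) := mul_le_mul (Gs_bd hξ hy) (hψlip x hx y hy) (abs_nonneg _) (by norm_num)
        _ = 2 * K * |x - y| := by ring
    have t3 : |(G01 ξ x - G01 ξ y) * φ x| ≤ 2 * K * |x - y| := by
      rw [abs_mul]
      calc |G01 ξ x - G01 ξ y| * |φ x|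
          ≤ 2 * |x - y| * K := mul_le_mul (G01_lip hξ hx hy) (hφb x hx) (abs_nonneg _)
            (by positivity)
        _ = 2 * K * |x - y| := by ring
    have t4 : |G01 ξ y * (φ x - φ y)| ≤ 2 * K * |x - y| := by
      rw [abs_mul]
      calc |G01 ξ y| * |φ x - φ y|
          ≤ 2 * (K * |x - y|) := mul_le_mul (G01_bd hξ hy) (hφlip x hx y hy) (abs_nonneg _) (by norm_num)
        _ = 2 * K * |x - y| := by ring
    calc |((ξ ^ 2 / 2 + min (x - ξ) 0) - (ξ ^ 2 / 2 + min (y - ξ) 0)) * ψ x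
          + (ξ ^ 2 / 2 + min (y - ξ) 0) * (ψ x - ψ y)
          + (G01 ξ x - G01 ξ y) * φ x
          + G01 ξ y * (φ x - φ y)|
        ≤ |((ξ ^ 2 / 2 + min (x - ξ) 0) - (ξ ^ 2 / 2 + min (y - ξ) 0)) * ψ x
          + (ξ ^ 2 / 2 + min (y - ξ) 0) * (ψ x - ψ y)
          + (G01 ξ x - G01 ξ y) * φ x| + |G01 ξ y * (φ x - φ y)| := abs_add_le _ _
      _ ≤ |((ξ ^ 2 / 2 + min (x - ξ) 0) - (ξ ^ 2 / 2 + min (y - ξ) 0)) * ψ x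
          + (ξ ^ 2 / 2 + min (y - ξ) 0) * (ψ x - ψ y)| + |(G01 ξ x - G01 ξ y) * φ x|
          + |G01 ξ y * (φ x - φ y)| := by gcongr; exact abs_add_le _ _
      _ ≤ (|((ξ ^ 2 / 2 + min (x - ξ) 0) - (ξ ^ 2 / 2 + min (y - ξ) 0)) * ψ x|
          + |(ξ ^ 2 / 2 + min (y - ξ) 0) * (ψ x - ψ y)|) + |(G01 ξ x - G01 ξ y) * φ x|
          + |G01 ξ y * (φ x - φ y)| := by gcongr ?_ + _ + _; exact abs_add_le _ _
      _ ≤ 8 * K * |x - y| := by nlinarith [mul_nonneg hK0 (abs_nonneg (x - y))]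
  have hψd : ∀ x ∈ Ioo (0:ℝ) 1, HasDerivAt ψ (φ x) x := fun x hx =>
    ((hψ.differentiableOn two_ne_zero x (Ioo_subset_Icc_self hx)).hasDerivWithinAt).hasDerivAt
      (Icc_mem_nhds hx.1 hx.2)
  have hDc : ∀ ξ : ℝ, ContinuousOn (D ξ) (Icc (0:ℝ) 1) := by
    intro ξ
    apply ContinuousOn.add
    · exact ((continuous_const.add ((continuous_id'.sub continuous_const).min
        continuous_const)).continuousOn).mul hψc
    · exact (continuous_G01 ξ).continuousOn.mul hφc
  refine ⟨2 * K + 1, by linarith, ?_⟩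
  intro N hN1 ξ hξ
  have hN : (0:ℝ) < N := by exact_mod_cast Nat.lt_of_lt_of_le Nat.zero_lt_one hN1
  set f := fun s : ℝ => G01 ξ s * ψ s with hf
  set a : ℕ → ℝ := fun j => (j : ℝ) / N with ha
  have hfc : ContinuousOn f (Icc (0:ℝ) 1) := (continuous_G01 ξ).continuousOn.mul hψc
  have hmono : ∀ i : ℕ, a i < a (i + 1) := by
    intro i
    show (i : ℝ) / N < ((i + 1 : ℕ) : ℝ) / N
    rw [div_lt_div_iff₀ hN hN]
    push_cast
    nlinarith
  have ha0 : a 0 = 0 := by simp [ha]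
  have haN : a N = 1 := by
    show (N : ℝ) / N = 1
    field_simp
  have hstep : ∀ i : ℕ, a (i + 1) - a i = 1 / N := by
    intro i
    show ((i + 1 : ℕ) : ℝ) / N - (i : ℝ) / N = 1 / N
    push_cast
    field_simp
    ring
  have hsub : ∀ i : ℕ, i < N → Icc (a i) (a (i + 1)) ⊆ Icc (0:ℝ) 1 := by
    intro i hi
    apply Icc_subset_Icc
    · show (0:ℝ) ≤ (i : ℝ) / N
      positivity
    · show ((i + 1 : ℕ) : ℝ) / N ≤ 1
      rw [div_le_one hN]
      exact_mod_cast hi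
  have hint : ∀ k : ℕ, k < N → IntervalIntegrable f volume (a k) (a (k + 1)) := by
    intro k hk
    exact (by rw [uIcc_of_le (hmono k).le]; exact hfc.mono (hsub k hk) :
      ContinuousOn f (uIcc (a k) (a (k + 1)))).intervalIntegrable
  have hsplit : (∫ s in (0:ℝ)..1, f s)
      = ∑ k ∈ Finset.range N, ∫ s in (a k)..(a (k + 1)), f s := by
    have := intervalIntegral.sum_integral_adjacent_intervals (μ := volume) hint
    rw [ha0, haN] at this
    exact this.symm
  -- the trapezoidal sum identity
  have h0N : (0 : ℕ) ≠ N := fun h => by omega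
  have hgoalsum : (∑ j ∈ Finset.range (N + 1),
        (1 / (N:ℝ)) * trapWeight N j * G01 ξ ((j : ℝ) / N) * ψ ((j : ℝ) / N))
      = ∑ i ∈ Finset.range N, ((a (i + 1) - a i) / 2 * (f (a i) + f (a (i + 1)))) := by
    have e1 : ∀ j ∈ Finset.range (N + 1),
        (1 / (N:ℝ)) * trapWeight N j * G01 ξ ((j : ℝ) / N) * ψ ((j : ℝ) / N)
        = 2 * (1 / (2 * N) * f (a j))
          - (if j = 0 then 1 / (2 * (N:ℝ)) * f (a j) else 0)
          - (if j = N then 1 / (2 * (N:ℝ)) * f (a j) else 0) := by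
      intro j hj
      have hfa : f (a j) = G01 ξ ((j : ℝ) / N) * ψ ((j : ℝ) / N) := rfl
      unfold trapWeight
      by_cases h0 : j = 0
      · subst h0
        rw [if_pos (Or.inl rfl), if_pos rfl, if_neg h0N, hfa]
        field_simp
        ring
      · by_cases hN' : j = N
        · subst hN'
          rw [if_pos (Or.inr rfl), if_neg (by omega : j ≠ 0), if_pos rfl, hfa]
          field_simp
          ring
        · rw [if_neg (by tauto), if_neg h0, if_neg hN', hfa]
          field_simp
          ring
    rw [Finset.sum_congr rfl e1]
    have e2 : ∀ i ∈ Finset.range N,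
        (a (i + 1) - a i) / 2 * (f (a i) + f (a (i + 1)))
        = 1 / (2 * (N:ℝ)) * f (a i) + 1 / (2 * N) * f (a (i + 1)) := by
      intro i _
      rw [hstep i]
      ring
    rw [Finset.sum_congr rfl e2]
    rw [Finset.sum_sub_distrib, Finset.sum_sub_distrib, Finset.sum_add_distrib]
    rw [Finset.sum_ite_eq' (Finset.range (N + 1)) 0 (fun j => 1 / (2 * (N:ℝ)) * f (a j)),
      Finset.sum_ite_eq' (Finset.range (N + 1)) N (fun j => 1 / (2 * (N:ℝ)) * f (a j))]
    rw [if_pos (Finset.mem_range.mpr (by omega)), if_pos (Finset.mem_range.mpr (by omega))]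
    have e3 : ∑ i ∈ Finset.range N, 1 / (2 * (N:ℝ)) * f (a (i + 1))
        = (∑ j ∈ Finset.range (N + 1), 1 / (2 * (N:ℝ)) * f (a j)) - 1 / (2 * N) * f (a 0) := by
      rw [Finset.sum_range_succ' (fun j => 1 / (2 * (N:ℝ)) * f (a j)) N]
      ring
    have e4 : ∑ i ∈ Finset.range N, 1 / (2 * (N:ℝ)) * f (a i)
        = (∑ j ∈ Finset.range (N + 1), 1 / (2 * (N:ℝ)) * f (a j)) - 1 / (2 * N) * f (a N) := by
      rw [Finset.sum_range_succ (fun j => 1 / (2 * (N:ℝ)) * f (a j)) N]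
      ring
    rw [e3, e4, ← Finset.mul_sum]
    ring
  rw [hgoalsum, hsplit, ← Finset.sum_sub_distrib]
  -- per-interval error bound
  have hterm : ∀ i ∈ Finset.range N,
      |(∫ s in (a i)..(a (i + 1)), f s) - (a (i + 1) - a i) / 2 * (f (a i) + f (a (i + 1)))|
        ≤ 8 * K * (1 / (N:ℝ)) ^ 3 / 4 := by
    intro i hi
    have hi' := Finset.mem_range.mp hi
    have hmid : (a i + a (i + 1)) / 2 ∈ Icc (a i) (a (i + 1)) := by
      constructor <;> [linarith [hmono i]; linarith [hmono i]]
    have h1 := trap_err f (D ξ) (a i) (a (i + 1)) (8 * K) (hmono i) (by positivity)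
      (hfc.mono (hsub i hi')) ((hDc ξ).mono (hsub i hi'))
      (fun x hx => by
        have hx01 : x ∈ Ioo (0:ℝ) 1 := by
          have h2 := hsub i hi'
          have h3 : x ∈ Icc (a i) (a (i + 1)) := Ioo_subset_Icc_self hx
          have h4 := h2 h3
          constructor
          · have : (0:ℝ) ≤ a i := by show (0:ℝ) ≤ (i:ℝ)/N; positivity
            linarith [hx.1]
          · have : a (i + 1) ≤ 1 := by
              show ((i + 1 : ℕ) : ℝ) / N ≤ 1
              rw [div_le_one hN]; exact_mod_cast hi'
            linarith [hx.2]
        exact (hasDerivAt_G01 ξ x).mul (hψd x hx01))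
      (fun x hx => hlip ξ hξ x (hsub i hi' hx) _ (hsub i hi' hmid))
    calc |(∫ s in (a i)..(a (i + 1)), f s) - (a (i + 1) - a i) / 2 * (f (a i) + f (a (i + 1)))|
        ≤ 8 * K * (a (i + 1) - a i) ^ 3 / 4 := h1
      _ = 8 * K * (1 / (N:ℝ)) ^ 3 / 4 := by rw [hstep i]
  calc |∑ i ∈ Finset.range N,
        ((∫ s in (a i)..(a (i + 1)), f s) - (a (i + 1) - a i) / 2 * (f (a i) + f (a (i + 1))))|
      ≤ ∑ i ∈ Finset.range N,
        |(∫ s in (a i)..(a (i + 1)), f s) - (a (i + 1) - a i) / 2 * (f (a i) + f (a (i + 1)))| :=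
        Finset.abs_sum_le_sum_abs _ _
    _ ≤ ∑ _i ∈ Finset.range N, 8 * K * (1 / (N:ℝ)) ^ 3 / 4 := Finset.sum_le_sum hterm
    _ = N * (8 * K * (1 / (N:ℝ)) ^ 3 / 4) := by
        rw [Finset.sum_const, Finset.card_range, nsmul_eq_mul]
    _ = 2 * K * (1 / (N:ℝ)) ^ 2 := by field_simp; ring
    _ ≤ (2 * K + 1) * (1 / (N:ℝ)) ^ 2 := by
        apply mul_le_mul_of_nonneg_right (by linarith) (by positivity)
end

section
/- Let ψ: [0,1] → ℝ be twice continuously differentiable. Then there exists a constant C > 0 such that for every integer N ≥ 1, with h = 1/N, grid points s_j = j h, and trapezoidal weights ρ_0 = ρ_N = 1/2 and ρ_j = 1 for 1 ≤ j ≤ N − 1, one has for every ξ ∈ [0,1]: |∫₀¹ |G(ξ, s)| ψ(s) ds − Σ_{j=0}^{N} h ρ_j |G(ξ, s_j)| ψ(s_j)| ≤ C h². In particular (taking ψ ≡ 1), Σ_{j=0}^{N} h ρ_j |G(ξ, s_j)| ≤ max_{t∈[0,1]} ∫₀¹ |G(t,s)| ds + C h² for all ξ ∈ [0,1] and N ≥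 1. -/
open Set MeasureTheory

noncomputable def gD (ξ s : ℝ) : ℝ :=
  if s ≤ ξ then -((ξ^2 - 2*ξ + 2*s)/2) else -(ξ^2/2)

lemma hasDerivAt_negG (ξ x : ℝ) : HasDerivAt (fun s => -G01 ξ s) (gD ξ x) x := by
  have h1 : HasDerivWithinAt (fun s => -G01 ξ s) (gD ξ x) (Iic ξ) x := by
    rcases le_or_gt x ξ with hx | hx
    · have hp : HasDerivAt (fun s : ℝ => -(s / 2 * (ξ^2 - 2*ξ + s)))
          (-((ξ^2 - 2*ξ + 2*x)/2)) x := by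
        have h0 := (((hasDerivAt_id x).div_const 2).mul
          ((hasDerivAt_const x (ξ^2 - 2*ξ)).add (hasDerivAt_id x))).neg
        refine h0.congr_deriv ?_
        simp only [id_eq, Pi.add_apply]
        ring
      have : gD ξ x = -((ξ^2 - 2*ξ + 2*x)/2) := by simp [gD, if_pos hx]
      rw [this]
      apply hp.hasDerivWithinAt.congr
      · intro y hy
        simp only [G01, if_pos (mem_Iic.mp hy)]
      · simp only [G01, if_pos hx]
    · exact hasDerivWithinAt_iff_hasFDerivWithinAt.mpr
        (HasFDerivWithinAt.of_notMem_closure (by simpa using hx.not_ge))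
  have h2 : HasDerivWithinAt (fun s => -G01 ξ s) (gD ξ x) (Ici ξ) x := by
    rcases lt_or_ge x ξ with hx | hx
    · exact hasDerivWithinAt_iff_hasFDerivWithinAt.mpr
        (HasFDerivWithinAt.of_notMem_closure (by simpa using hx.not_ge))
    · have hp : HasDerivAt (fun s : ℝ => -(ξ^2 / 2 * (s - 1))) (-(ξ^2/2)) x := by
        have h0 := (((hasDerivAt_id x).sub_const 1).const_mul (ξ^2/2)).neg
        refine h0.congr_deriv ?_
        ring
      have hval : gD ξ x = -(ξ^2/2) := by
        by_cases hxe : x ≤ ξ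
        · have : x = ξ := le_antisymm hxe hx
          subst this
          simp only [gD, if_pos le_rfl]
          ring
        · simp [gD, hxe]
      rw [hval]
      have heq : ∀ y ∈ Ici ξ, -G01 ξ y = -(ξ^2 / 2 * (y - 1)) := by
        intro y hy
        by_cases hyle : y ≤ ξ
        · have hyy : y = ξ := le_antisymm hyle hy
          subst hyy
          simp only [G01, if_pos le_rfl]
          ring
        · simp only [G01, if_neg hyle]
      exact hp.hasDerivWithinAt.congr heq (heq x hx)
  have h3 := h1.union h2
  rw [Iic_union_Ici] at h3
  exact hasDerivWithinAt_univ.mp h3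

lemma gD_lip (ξ x y : ℝ) : |gD ξ x - gD ξ y| ≤ |x - y| := by
  have h1 := le_abs_self (x - y)
  have h2 := neg_abs_le (x - y)
  unfold gD
  by_cases hx : x ≤ ξ <;> by_cases hy : y ≤ ξ <;>
    simp only [if_pos, if_neg, hx, hy, if_true, if_false] <;>
    rw [abs_le] <;> constructor <;> (try push_neg at *) <;> nlinarith

lemma gD_bound {ξ x : ℝ} (hξ : ξ ∈ Icc (0:ℝ) 1) (hx : x ∈ Icc (0:ℝ) 1) : |gD ξ x| ≤ 3 := by
  obtain ⟨h1, h2⟩ := hξ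
  obtain ⟨h3, h4⟩ := hx
  unfold gD
  by_cases h : x ≤ ξ <;> simp only [h, if_true, if_false] <;> rw [abs_le] <;>
    constructor <;> nlinarith

lemma negG_bound {ξ x : ℝ} (hξ : ξ ∈ Icc (0:ℝ) 1) (hx : x ∈ Icc (0:ℝ) 1) : |-G01 ξ x| ≤ 2 := by
  obtain ⟨h1, h2⟩ := hξ
  obtain ⟨h3, h4⟩ := hx
  unfold G01
  by_cases h : x ≤ ξ <;> simp only [h, if_true, if_false, abs_neg] <;> rw [abs_le] <;>
    constructor <;> nlinarith

lemma G01_nonpos {ξ x : ℝ} (hξ : ξ ∈ Icc (0:ℝ) 1) (hx : x ∈ Icc (0:ℝ) 1) : G01 ξ x ≤ 0 := by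
  obtain ⟨h1, h2⟩ := hξ
  obtain ⟨h3, h4⟩ := hx
  unfold G01
  by_cases h : x ≤ ξ <;> simp only [h, if_true, if_false]
  · nlinarith [mul_nonneg h3 (by nlinarith [mul_nonneg h1 (sub_nonneg.2 h2)] :
      (0:ℝ) ≤ 2*ξ - ξ^2 - x)]
  · nlinarith [sq_nonneg ξ]

lemma negG_lip {ξ : ℝ} (hξ : ξ ∈ Icc (0:ℝ) 1) :
    ∀ x ∈ Icc (0:ℝ) 1, ∀ y ∈ Icc (0:ℝ) 1, |(-G01 ξ x) - (-G01 ξ y)| ≤ 3 * |x - y| := by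
  intro x hx y hy
  have := (convex_Icc (0:ℝ) 1).norm_image_sub_le_of_norm_hasDerivWithin_le
    (f := fun s => -G01 ξ s) (f' := gD ξ)
    (fun z hz => (hasDerivAt_negG ξ z).hasDerivWithinAt)
    (fun z hz => by rw [Real.norm_eq_abs]; exact gD_bound hξ hz) hy hx
  simpa [Real.norm_eq_abs] using this

lemma trap_interval {f f' : ℝ → ℝ} {a b L : ℝ} (hab : a ≤ b) (hL0 : 0 ≤ L)
    (hd : ∀ x ∈ Icc a b, HasDerivWithinAt f (f' x) (Icc a b) x)
    (hLip : ∀ x ∈ Icc a b, ∀ y ∈ Icc a b, |f' x - f' y| ≤ L * |x - y|) :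
    |(∫ s in a..b, f s) - (b - a)/2 * (f a + f b)| ≤ L * (b - a)^3 := by
  have hfc : ContinuousOn f (Icc a b) := fun x hx => (hd x hx).continuousWithinAt
  have hf'lip : LipschitzOnWith L.toNNReal f' (Icc a b) := by
    apply LipschitzOnWith.of_dist_le_mul
    intro x hx y hy
    rw [Real.dist_eq, Real.dist_eq]
    calc |f' x - f' y| ≤ L * |x - y| := hLip x hx y hy
      _ = (L.toNNReal : ℝ) * |x - y| := by rw [Real.coe_toNNReal L hL0]
  have hf'c : ContinuousOn f' (Icc a b) := hf'lip.continuousOn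
  have hint : ∀ x ∈ Icc a b, IntervalIntegrable f volume a x := by
    intro x hx
    exact (hfc.mono (by rw [uIcc_of_le hx.1]; exact Icc_subset_Icc le_rfl hx.2)).intervalIntegrable
  have hint' : ∀ x ∈ Icc a b, IntervalIntegrable f' volume a x := by
    intro x hx
    exact (hf'c.mono (by rw [uIcc_of_le hx.1]; exact Icc_subset_Icc le_rfl hx.2)).intervalIntegrable
  have hFTC : ∀ x ∈ Icc a b, f x - f a = ∫ t in a..x, f' t := by
    intro x hx
    exact (intervalIntegral.integral_eq_sub_of_hasDeriv_right_of_le hx.1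
      (hfc.mono (Icc_subset_Icc le_rfl hx.2))
      (fun t ht => ((hd t ⟨le_of_lt ht.1, le_trans (le_of_lt ht.2) hx.2⟩).hasDerivAt
        (Icc_mem_nhds ht.1 (ht.2.trans_le hx.2))).hasDerivWithinAt)
      (hint' x hx)).symm
  -- the auxiliary functions
  set g : ℝ → ℝ := fun x => (∫ s in a..x, f s) - (x - a)/2 * (f a + f x) with hgdef
  set g' : ℝ → ℝ := fun x => (f x - f a)/2 - (x - a)/2 * f' x with hg'def
  have hg : ∀ x ∈ Icc a b, HasDerivWithinAt g (g' x) (Icc a b) x := by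
    intro x hx
    haveI : Fact (x ∈ Icc a b) := ⟨hx⟩
    have h1 : HasDerivWithinAt (fun u => ∫ s in a..u, f s) (f x) (Icc a b) x :=
      intervalIntegral.integral_hasDerivWithinAt_right (hint x hx)
        (hfc.stronglyMeasurableAtFilter_nhdsWithin measurableSet_Icc x)
        (hfc x hx)
    have h2 : HasDerivWithinAt (fun u : ℝ => (u - a)/2 * (f a + f u))
        ((1:ℝ)/2 * (f a + f x) + (x - a)/2 * (0 + f' x)) (Icc a b) x := by
      exact (((hasDerivAt_id x).sub_const a).div_const 2).hasDerivWithinAt.mul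
        ((hasDerivWithinAt_const x _ (f a)).add (hd x hx))
    have := h1.sub h2
    refine this.congr_deriv ?_
    simp only [hg'def]
    ring
  have hg'bound : ∀ x ∈ Icc a b, |g' x| ≤ L * (b - a)^2 := by
    intro x hx
    have e1 : (∫ t in a..x, f' t) - (x - a) * f' x = ∫ t in a..x, (f' t - f' x) := by
      rw [intervalIntegral.integral_sub (hint' x hx) intervalIntegrable_const,
        intervalIntegral.integral_const, smul_eq_mul]
    have e2 : |∫ t in a..x, (f' t - f' x)| ≤ (L * (b - a)) * |x - a| := by
      rw [← Real.norm_eq_abs]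
      apply intervalIntegral.norm_integral_le_of_norm_le_const
      intro t ht
      rw [uIoc_of_le hx.1] at ht
      have htm : t ∈ Icc a b := ⟨le_of_lt ht.1, ht.2.trans hx.2⟩
      rw [Real.norm_eq_abs]
      calc |f' t - f' x| ≤ L * |t - x| := hLip t htm x hx
        _ ≤ L * (b - a) := by
            apply mul_le_mul_of_nonneg_left _ hL0
            rw [abs_le]; constructor <;> [nlinarith [htm.1, htm.2, hx.1, hx.2];
              nlinarith [htm.1, htm.2, hx.1, hx.2]]
    have e3 : |x - a| ≤ b - a := by rw [abs_le]; constructor <;> nlinarith [hx.1, hx.2]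
    have e4 : |(f x - f a) - (x - a) * f' x| ≤ L * (b - a)^2 := by
      rw [hFTC x hx, e1]
      calc |∫ t in a..x, (f' t - f' x)| ≤ (L * (b - a)) * |x - a| := e2
        _ ≤ (L * (b - a)) * (b - a) := by
            apply mul_le_mul_of_nonneg_left e3 (by nlinarith)
        _ = L * (b - a)^2 := by ring
    have e5 : g' x = ((f x - f a) - (x - a) * f' x) / 2 := by simp only [hg'def]; ring
    have e6 : (0:ℝ) ≤ L * (b - a)^2 := by positivity
    rw [e5, abs_div, abs_two, div_le_iff₀ (by norm_num : (0:ℝ) < 2), abs_le]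
    rw [abs_le] at e4
    constructor <;> [linarith [e4.1]; linarith [e4.2]]
  -- conclude via mean value inequality
  have hga : g a = 0 := by simp [hgdef]
  have key : |g b - g a| ≤ (L * (b - a)^2) * |b - a| := by
    have := (convex_Icc a b).norm_image_sub_le_of_norm_hasDerivWithin_le hg
      (fun x hx => by rw [Real.norm_eq_abs]; exact hg'bound x hx)
      (left_mem_Icc.2 hab) (right_mem_Icc.2 hab)
    simpa [Real.norm_eq_abs] using this
  rw [hga, sub_zero] at key
  have : g b = (∫ s in a..b, f s) - (b - a)/2 * (f a + f b) := rfl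
  rw [← this]
  calc |g b| ≤ (L * (b - a)^2) * |b - a| := key
    _ = L * (b - a)^3 := by rw [abs_of_nonneg (by linarith : (0:ℝ) ≤ b - a)]; ring

lemma trap_sum_eq (φ : ℕ → ℝ) {N : ℕ} (hN : 1 ≤ N) (h : ℝ) :
    ∑ j ∈ Finset.range (N+1), h * trapWeight N j * φ j
      = ∑ i ∈ Finset.range N, h/2 * (φ i + φ (i+1)) := by
  obtain ⟨M, rfl⟩ : ∃ M, N = M + 1 := ⟨N - 1, by omega⟩
  have key : ∀ j ∈ Finset.range (M+2), h * trapWeight (M+1) j * φ j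
      = h * φ j - ((if j = 0 then h/2 * φ j else 0) + (if j = M+1 then h/2 * φ j else 0)) := by
    intro j _
    by_cases h0 : j = 0
    · subst h0; simp [trapWeight]; ring
    · by_cases h1 : j = M + 1
      · subst h1; simp [trapWeight, h0]; ring
      · simp [trapWeight, h0, h1]
  rw [Finset.sum_congr rfl key, Finset.sum_sub_distrib, Finset.sum_add_distrib,
    Finset.sum_ite_eq' (Finset.range (M+2)) 0 (fun j => h/2 * φ j),
    Finset.sum_ite_eq' (Finset.range (M+2)) (M+1) (fun j => h/2 * φ j)]
  simp only [Finset.mem_range, Nat.lt_add_of_pos_left, if_pos, Nat.lt_succ_self,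
    Nat.zero_lt_succ, Nat.succ_lt_succ]
  have e1 : ∑ i ∈ Finset.range (M+1), h/2 * (φ i + φ (i+1))
      = h/2 * (∑ i ∈ Finset.range (M+1), φ i) + h/2 * (∑ i ∈ Finset.range (M+1), φ (i+1)) := by
    rw [Finset.mul_sum, Finset.mul_sum, ← Finset.sum_add_distrib]
    exact Finset.sum_congr rfl fun i _ => by ring
  have e2 : ∑ i ∈ Finset.range (M+2), φ i = (∑ i ∈ Finset.range (M+1), φ (i+1)) + φ 0 :=
    Finset.sum_range_succ' φ (M+1)
  have e3 : ∑ i ∈ Finset.range (M+2), φ i = (∑ i ∈ Finset.range (M+1), φ i) + φ (M+1) :=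
    Finset.sum_range_succ φ (M+1)
  rw [e1, ← Finset.mul_sum]
  linear_combination (h/2) * e2 + (h/2) * e3

lemma trap_composite {f f' : ℝ → ℝ} {L : ℝ} (hL0 : 0 ≤ L)
    (hd : ∀ x ∈ Icc (0:ℝ) 1, HasDerivWithinAt f (f' x) (Icc 0 1) x)
    (hLip : ∀ x ∈ Icc (0:ℝ) 1, ∀ y ∈ Icc (0:ℝ) 1, |f' x - f' y| ≤ L * |x - y|)
    {N : ℕ} (hN : 1 ≤ N) :
    |(∫ s in (0:ℝ)..1, f s)
        - ∑ j ∈ Finset.range (N+1), (1/(N:ℝ)) * trapWeight N j * f ((j:ℝ) / N)|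
      ≤ L * (1/(N:ℝ))^2 := by
  have hNpos : (0:ℝ) < N := by exact_mod_cast Nat.pos_of_ne_zero (by omega)
  set a : ℕ → ℝ := fun k => (k:ℝ) / N with hadef
  have hmem : ∀ k : ℕ, k ≤ N → a k ∈ Icc (0:ℝ) 1 := by
    intro k hk
    constructor
    · positivity
    · rw [div_le_one hNpos]; exact_mod_cast hk
  have hsubset : ∀ k : ℕ, k < N → Icc (a k) (a (k+1)) ⊆ Icc (0:ℝ) 1 := by
    intro k hk
    apply Icc_subset_Icc (hmem k (le_of_lt hk)).1 (hmem (k+1) hk).2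
  have hstep : ∀ k : ℕ, a (k+1) - a k = 1 / (N:ℝ) := by
    intro k
    simp only [hadef]
    push_cast
    field_simp
    ring
  have hle : ∀ k : ℕ, a k ≤ a (k+1) := fun k => by
    have := hstep k; nlinarith [one_div_pos.2 hNpos]
  have hfc : ContinuousOn f (Icc (0:ℝ) 1) := fun x hx => (hd x hx).continuousWithinAt
  have hint : ∀ k < N, IntervalIntegrable f volume (a k) (a (k+1)) := by
    intro k hk
    exact (hfc.mono (by rw [uIcc_of_le (hle k)]; exact hsubset k hk)).intervalIntegrable
  have hsplit : ∑ k ∈ Finset.range N, ∫ x in a k..a (k+1), f x = ∫ x in (0:ℝ)..1, f x := by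
    have := intervalIntegral.sum_integral_adjacent_intervals hint
    have ha0 : a 0 = 0 := by simp [hadef]
    have haN : a N = 1 := by simp [hadef, hNpos.ne']
    rwa [ha0, haN] at this
  rw [trap_sum_eq (fun j => f (a j)) hN (1/(N:ℝ)), ← hsplit, ← Finset.sum_sub_distrib]
  calc |∑ k ∈ Finset.range N, ((∫ x in a k..a (k+1), f x) - 1/(N:ℝ)/2 * (f (a k) + f (a (k+1))))|
      ≤ ∑ k ∈ Finset.range N, |(∫ x in a k..a (k+1), f x) - 1/(N:ℝ)/2 * (f (a k) + f (a (k+1)))| :=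
        Finset.abs_sum_le_sum_abs _ _
    _ ≤ ∑ k ∈ Finset.range N, L * (1/(N:ℝ))^3 := by
        apply Finset.sum_le_sum
        intro k hk
        rw [Finset.mem_range] at hk
        have key := trap_interval (hle k) hL0
          (fun x hx => (hd x (hsubset k hk hx)).mono (hsubset k hk))
          (fun x hx y hy => hLip x (hsubset k hk hx) y (hsubset k hk hy))
        rw [hstep k] at key
        convert key using 3
    _ = N * (L * (1/(N:ℝ))^3) := by rw [Finset.sum_const, Finset.card_range, nsmul_eq_mul]
    _ = L * (1/(N:ℝ))^2 := by field_simp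

/-- Trapezoidal rule error bound for the absolute Green kernel. -/
theorem trapezoidal_rule_abs_green_kernel
    (ψ : ℝ → ℝ) (hψ : ContDiffOn ℝ 2 ψ (Icc 0 1)) :
    ∃ C > (0:ℝ),
      (∀ N : ℕ, 1 ≤ N → ∀ ξ ∈ Icc (0:ℝ) 1,
        |(∫ s in (0:ℝ)..1, |G01 ξ s| * ψ s)
            - ∑ j ∈ Finset.range (N + 1),
                (1 / (N:ℝ)) * trapWeight N j * |G01 ξ ((j : ℝ) / N)| * ψ ((j : ℝ) / N)|
          ≤ C * (1 / (N:ℝ)) ^ 2) ∧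
      (∀ M0 : ℝ,
        IsGreatest ((fun t => ∫ s in (0:ℝ)..1, |G01 t s|) '' Icc 0 1) M0 →
        ∀ N : ℕ, 1 ≤ N → ∀ ξ ∈ Icc (0:ℝ) 1,
          (∑ j ∈ Finset.range (N + 1), (1 / (N:ℝ)) * trapWeight N j * |G01 ξ ((j : ℝ) / N)|)
            ≤ M0 + C * (1 / (N:ℝ)) ^ 2) := by
  have hUD : UniqueDiffOn ℝ (Icc (0:ℝ) 1) := uniqueDiffOn_Icc one_pos
  set ψ' := derivWithin ψ (Icc 0 1) with hψ'def
  set ψ'' := derivWithin ψ' (Icc 0 1) with hψ''def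
  have hψ1 : ∀ x ∈ Icc (0:ℝ) 1, HasDerivWithinAt ψ (ψ' x) (Icc 0 1) x :=
    fun x hx => (hψ.differentiableOn (by norm_num) x hx).hasDerivWithinAt
  have hψ'cd : ContDiffOn ℝ 1 ψ' (Icc 0 1) := hψ.derivWithin hUD (by norm_num)
  have hψ2 : ∀ x ∈ Icc (0:ℝ) 1, HasDerivWithinAt ψ' (ψ'' x) (Icc 0 1) x :=
    fun x hx => (hψ'cd.differentiableOn one_ne_zero x hx).hasDerivWithinAt
  obtain ⟨B0, hB0⟩ := isCompact_Icc.exists_bound_of_continuousOn hψ.continuousOn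
  obtain ⟨B1, hB1⟩ := isCompact_Icc.exists_bound_of_continuousOn hψ'cd.continuousOn
  obtain ⟨B2, hB2⟩ := isCompact_Icc.exists_bound_of_continuousOn
    (hψ'cd.derivWithin (m := 0) hUD (by norm_num)).continuousOn
  set M₀ := max B0 0 with hM₀def
  set M₁ := max B1 0 with hM₁def
  set M₂ := max B2 0 with hM₂def
  have hM₀0 : 0 ≤ M₀ := le_max_right _ _
  have hM₁0 : 0 ≤ M₁ := le_max_right _ _
  have hM₂0 : 0 ≤ M₂ := le_max_right _ _
  have hbψ : ∀ x ∈ Icc (0:ℝ) 1, |ψ x| ≤ M₀ :=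
    fun x hx => le_trans (by rw [← Real.norm_eq_abs]; exact hB0 x hx) (le_max_left _ _)
  have hbψ' : ∀ x ∈ Icc (0:ℝ) 1, |ψ' x| ≤ M₁ :=
    fun x hx => le_trans (by rw [← Real.norm_eq_abs]; exact hB1 x hx) (le_max_left _ _)
  have hbψ'' : ∀ x ∈ Icc (0:ℝ) 1, |ψ'' x| ≤ M₂ :=
    fun x hx => le_trans (by rw [← Real.norm_eq_abs]; exact hB2 x hx) (le_max_left _ _)
  have hlipψ : ∀ x ∈ Icc (0:ℝ) 1, ∀ y ∈ Icc (0:ℝ) 1, |ψ x - ψ y| ≤ M₁ * |x - y| := by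
    intro x hx y hy
    have := (convex_Icc (0:ℝ) 1).norm_image_sub_le_of_norm_hasDerivWithin_le hψ1
      (fun z hz => by rw [Real.norm_eq_abs]; exact hbψ' z hz) hy hx
    simpa [Real.norm_eq_abs] using this
  have hlipψ' : ∀ x ∈ Icc (0:ℝ) 1, ∀ y ∈ Icc (0:ℝ) 1, |ψ' x - ψ' y| ≤ M₂ * |x - y| := by
    intro x hx y hy
    have := (convex_Icc (0:ℝ) 1).norm_image_sub_le_of_norm_hasDerivWithin_le hψ2
      (fun z hz => by rw [Real.norm_eq_abs]; exact hbψ'' z hz) hy hx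
    simpa [Real.norm_eq_abs] using this
  set L : ℝ := M₀ + 6 * M₁ + 2 * M₂ with hLdef
  have hL0 : 0 ≤ L := by positivity
  refine ⟨L + 1, by positivity, ?_, ?_⟩
  · -- part 1
    intro N hN ξ hξ
    have hNpos : (0:ℝ) < N := by exact_mod_cast Nat.pos_of_ne_zero (by omega)
    set F : ℝ → ℝ := fun s => -G01 ξ s * ψ s with hFdef
    set F' : ℝ → ℝ := fun x => gD ξ x * ψ x + -G01 ξ x * ψ' x with hF'def
    have hd : ∀ x ∈ Icc (0:ℝ) 1, HasDerivWithinAt F (F' x) (Icc 0 1) x :=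
      fun x hx => ((hasDerivAt_negG ξ x).hasDerivWithinAt).mul (hψ1 x hx)
    have hLip : ∀ x ∈ Icc (0:ℝ) 1, ∀ y ∈ Icc (0:ℝ) 1, |F' x - F' y| ≤ L * |x - y| := by
      intro x hx y hy
      have e : F' x - F' y = (gD ξ x - gD ξ y) * ψ x + gD ξ y * (ψ x - ψ y)
          + (((-G01 ξ x) - (-G01 ξ y)) * ψ' x + (-G01 ξ y) * (ψ' x - ψ' y)) := by
        simp only [hF'def]; ring
      rw [e]
      have t1 : |(gD ξ x - gD ξ y) * ψ x| ≤ M₀ * |x - y| := by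
        rw [abs_mul]
        calc |gD ξ x - gD ξ y| * |ψ x| ≤ |x - y| * M₀ :=
              mul_le_mul (gD_lip ξ x y) (hbψ x hx) (abs_nonneg _) (abs_nonneg _)
          _ = M₀ * |x - y| := mul_comm _ _
      have t2 : |gD ξ y * (ψ x - ψ y)| ≤ 3 * (M₁ * |x - y|) := by
        rw [abs_mul]
        exact mul_le_mul (gD_bound hξ hy) (hlipψ x hx y hy) (abs_nonneg _) (by norm_num)
      have t3 : |((-G01 ξ x) - (-G01 ξ y)) * ψ' x| ≤ (3 * |x - y|) * M₁ := by
        rw [abs_mul]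
        exact mul_le_mul (negG_lip hξ x hx y hy) (hbψ' x hx) (abs_nonneg _)
          (by positivity)
      have t4 : |(-G01 ξ y) * (ψ' x - ψ' y)| ≤ 2 * (M₂ * |x - y|) := by
        rw [abs_mul]
        exact mul_le_mul (negG_bound hξ hy) (hlipψ' x hx y hy) (abs_nonneg _) (by norm_num)
      calc |(gD ξ x - gD ξ y) * ψ x + gD ξ y * (ψ x - ψ y)
          + (((-G01 ξ x) - (-G01 ξ y)) * ψ' x + (-G01 ξ y) * (ψ' x - ψ' y))|
          ≤ |(gD ξ x - gD ξ y) * ψ x + gD ξ y * (ψ x - ψ y)|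
            + |((-G01 ξ x) - (-G01 ξ y)) * ψ' x + (-G01 ξ y) * (ψ' x - ψ' y)| := abs_add_le _ _
        _ ≤ (|(gD ξ x - gD ξ y) * ψ x| + |gD ξ y * (ψ x - ψ y)|)
            + (|((-G01 ξ x) - (-G01 ξ y)) * ψ' x| + |(-G01 ξ y) * (ψ' x - ψ' y)|) :=
              add_le_add (abs_add_le _ _) (abs_add_le _ _)
        _ ≤ (M₀ * |x - y| + 3 * (M₁ * |x - y|)) + ((3 * |x - y|) * M₁ + 2 * (M₂ * |x - y|)) :=
              add_le_add (add_le_add t1 t2) (add_le_add t3 t4)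
        _ = L * |x - y| := by rw [hLdef]; ring
    have err := trap_composite hL0 hd hLip hN
    have hmemj : ∀ j ∈ Finset.range (N+1), ((j:ℝ) / N) ∈ Icc (0:ℝ) 1 := by
      intro j hj
      rw [Finset.mem_range] at hj
      constructor
      · positivity
      · rw [div_le_one hNpos]; exact_mod_cast Nat.lt_succ_iff.mp hj
    have hIeq : (∫ s in (0:ℝ)..1, |G01 ξ s| * ψ s) = ∫ s in (0:ℝ)..1, F s := by
      apply intervalIntegral.integral_congr
      intro s hs
      rw [uIcc_of_le zero_le_one] at hs
      simp only [hFdef]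
      rw [abs_of_nonpos (G01_nonpos hξ hs)]
    have hSeq : ∑ j ∈ Finset.range (N+1),
        (1 / (N:ℝ)) * trapWeight N j * |G01 ξ ((j : ℝ) / N)| * ψ ((j : ℝ) / N)
        = ∑ j ∈ Finset.range (N+1), (1 / (N:ℝ)) * trapWeight N j * F ((j:ℝ) / N) := by
      apply Finset.sum_congr rfl
      intro j hj
      simp only [hFdef]
      rw [abs_of_nonpos (G01_nonpos hξ (hmemj j hj))]
      ring
    rw [hIeq, hSeq]
    calc |(∫ s in (0:ℝ)..1, F s)
        - ∑ j ∈ Finset.range (N+1), (1 / (N:ℝ)) * trapWeight N j * F ((j:ℝ) / N)|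
        ≤ L * (1/(N:ℝ))^2 := err
      _ ≤ (L + 1) * (1/(N:ℝ))^2 := by nlinarith [sq_nonneg (1/(N:ℝ))]
  · -- part 2
    intro M0 hM0 N hN ξ hξ
    have hNpos : (0:ℝ) < N := by exact_mod_cast Nat.pos_of_ne_zero (by omega)
    set F : ℝ → ℝ := fun s => -G01 ξ s with hFdef
    have hd : ∀ x ∈ Icc (0:ℝ) 1, HasDerivWithinAt F (gD ξ x) (Icc 0 1) x :=
      fun x hx => (hasDerivAt_negG ξ x).hasDerivWithinAt
    have hLip : ∀ x ∈ Icc (0:ℝ) 1, ∀ y ∈ Icc (0:ℝ) 1, |gD ξ x - gD ξ y| ≤ 1 * |x - y| := by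
      intro x hx y hy
      rw [one_mul]
      exact gD_lip ξ x y
    have err := trap_composite zero_le_one hd hLip hN
    rw [one_mul] at err
    have hmemj : ∀ j ∈ Finset.range (N+1), ((j:ℝ) / N) ∈ Icc (0:ℝ) 1 := by
      intro j hj
      rw [Finset.mem_range] at hj
      constructor
      · positivity
      · rw [div_le_one hNpos]; exact_mod_cast Nat.lt_succ_iff.mp hj
    have hSeq : ∑ j ∈ Finset.range (N+1),
        (1 / (N:ℝ)) * trapWeight N j * |G01 ξ ((j : ℝ) / N)|
        = ∑ j ∈ Finset.range (N+1), (1 / (N:ℝ)) * trapWeight N j * F ((j:ℝ) / N) := by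
      apply Finset.sum_congr rfl
      intro j hj
      simp only [hFdef]
      rw [abs_of_nonpos (G01_nonpos hξ (hmemj j hj))]
    have hIeq : (∫ s in (0:ℝ)..1, |G01 ξ s|) = ∫ s in (0:ℝ)..1, F s := by
      apply intervalIntegral.integral_congr
      intro s hs
      rw [uIcc_of_le zero_le_one] at hs
      simp only [hFdef]
      rw [abs_of_nonpos (G01_nonpos hξ hs)]
    have hIle : (∫ s in (0:ℝ)..1, F s) ≤ M0 := by
      rw [← hIeq]
      exact hM0.2 ⟨ξ, hξ, rfl⟩
    rw [hSeq]
    have habs := abs_le.mp err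
    have h1N : (0:ℝ) ≤ (1/(N:ℝ))^2 := by positivity
    nlinarith [habs.1, habs.2]
end
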